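/- arXiv:1708.08034 — 2 statements merged into one kernel-verified Lean document; each statement's English description precedes it below -/
import Mathlib

section
/- For every n ≥ 1 and every (π,S) ∈ INC(n), the following polynomial identity in the variables α, β, t, γ holds: C^{(π,S)}_{α,β,t,γ} = Π_{U ∈ π∖S} κ_{|U|} · Π_{V ∈ S} ω_{|V|}, where κ_1 = α, κ_m = t·M_{m−2}(β,γ) for m ≥ 2, and ω_m = M_{m−1}(β,γ). -/
open Finset
open scoped Classical

noncomputable section

/-- A partition of `Fin n`, given by its (finite) set of blocks. -/
def IsPartition {n : ℕ} (P : Finset (Finset (Fin n))) : Prop :=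
  (∀ B ∈ P, B.Nonempty) ∧ ∀ i : Fin n, ∃! B : Finset (Fin n), B ∈ P ∧ i ∈ B

/-- Refinement order on partitions. -/
def Refines {n : ℕ} (P Q : Finset (Finset (Fin n))) : Prop :=
  ∀ B ∈ P, ∃ C ∈ Q, B ⊆ C

/-- Non-crossing partitions. -/
def IsNoncrossing {n : ℕ} (P : Finset (Finset (Fin n))) : Prop :=
  ¬ ∃ U ∈ P, ∃ V ∈ P, U ≠ V ∧ ∃ i ∈ U, ∃ k ∈ U, ∃ j ∈ V, ∃ l ∈ V,
      i < j ∧ j < k ∧ k < l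

/-- Outer blocks. -/
def IsOuter {n : ℕ} (P : Finset (Finset (Fin n))) (V : Finset (Fin n)) : Prop :=
  ¬ ∃ U ∈ P, U ≠ V ∧ ∃ i ∈ U, ∃ j ∈ U, ∀ x ∈ V, i < x ∧ x < j

/-- The Motzkin polynomials: `M 0 = 1` and
`M (j+1) = β * M j + γ * ∑_{k=0}^{j-1} M k * M (j-1-k)`. -/
def motzkin (β γ : ℂ) : ℕ → ℂ
  | 0 => 1
  | j + 1 =>
      β * motzkin β γ j
        + γ * ∑ k ∈ (Finset.range j).attach,
            motzkin β γ k.1 * motzkin β γ (j - 1 - k.1)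
  decreasing_by
  · omega
  · have := Finset.mem_range.mp k.2; omega
  · omega

/-- The coefficient `C^{(π,S)}_{α,β,t,γ}`. -/
def Ccoef {n : ℕ} (α β t γ : ℂ) (π S : Finset (Finset (Fin n))) : ℂ :=
  ∑ σ ∈ Finset.univ.filter (fun σ : Finset (Finset (Fin n)) =>
      IsPartition σ ∧ IsNoncrossing σ ∧ Refines σ π
        ∧ (∀ U ∈ π, U ∉ S → ∃ C ∈ σ, ∃ m ∈ U, ∃ M ∈ U, m ∈ C ∧ M ∈ C
              ∧ (∀ x ∈ U, m ≤ x) ∧ (∀ x ∈ U, x ≤ M))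
        ∧ (∀ B ∈ σ, B.card = 1 →
            (B ∈ π ∨ ∃ V ∈ S, ∃ x ∈ B, x ∈ V ∧ ∀ y ∈ V, x ≤ y))),
    α ^ ((π \ S).filter fun U => U.card = 1).card
      * β ^ (n + S.card + ((π \ S).filter fun U => U.card = 1).card - 2 * σ.card)
      * t ^ ((π \ S).filter fun U => 2 ≤ U.card).card
      * γ ^ (σ.card - π.card)

/-- The free cumulant coefficients: `κ 1 = α` and `κ m = t * M_{m-2}(β,γ)` for `m ≥ 2`. -/
def kappa (α β t γ : ℂ) (m : ℕ) : ℂ :=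
  if m = 1 then α else t * motzkin β γ (m - 2)

def eseq (β γ : ℂ) : ℕ → ℂ
  | 0 => 1
  | 1 => 0
  | (m+2) => γ * ∑ k ∈ (Finset.range (m+1)).attach,
      motzkin β γ k.1 * eseq β γ (m - k.1)
  decreasing_by
  · omega

def hseq (β γ : ℂ) (m : ℕ) : ℂ :=
  ∑ k ∈ Finset.range (m-1), motzkin β γ k * eseq β γ (m-2-k)

variable (β γ : ℂ)

lemma motzkin_succ (j : ℕ) : motzkin β γ (j+1)
    = β * motzkin β γ j + γ * ∑ k ∈ Finset.range j, motzkin β γ k * motzkin β γ (j-1-k) := by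
  rw [motzkin, Finset.sum_attach (Finset.range j) (fun k => motzkin β γ k * motzkin β γ (j-1-k))]

lemma eseq_eq_hseq : ∀ m : ℕ, 1 ≤ m → eseq β γ m = γ * hseq β γ m := by
  intro m hm
  match m, hm with
  | 1, _ => simp [eseq, hseq]
  | (m+2), _ =>
    rw [eseq, hseq]
    congr 1
    have h1 : m + 2 - 1 = m + 1 := rfl
    rw [h1, Finset.sum_attach (Finset.range (m+1)) (fun k => motzkin β γ k * eseq β γ (m - k))]
    apply Finset.sum_congr rfl
    intro k hk
    congr 2 <;> omega

lemma seqL : ∀ m : ℕ, eseq β γ m + β * hseq β γ (m+1) = motzkin β γ m := by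
  intro m
  induction m using Nat.strong_induction_on with
  | _ m ih =>
    match m with
    | 0 => simp [eseq, hseq, motzkin]
    | (m+1) =>
      have hh : hseq β γ (m+2) = motzkin β γ m * eseq β γ 0
          + ∑ k ∈ Finset.range m, motzkin β γ k * eseq β γ (m - k) := by
        rw [hseq]
        have h1 : m + 2 - 1 = m + 1 := rfl
        rw [h1, Finset.sum_range_succ, add_comm]
        have h2 : m + 2 - 2 - m = 0 := by omega
        rw [h2]
        rfl
      rw [hh, eseq_eq_hseq β γ (m+1) (by omega), motzkin_succ]
      have hh2 : hseq β γ (m+1) = ∑ k ∈ Finset.range m, motzkin β γ k * eseq β γ (m-1-k) := by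
        rw [hseq]; apply Finset.sum_congr (by congr 1) (fun k hk => by congr 2)
      rw [hh2]
      have main : ∀ k ∈ Finset.range m,
          γ * (motzkin β γ k * eseq β γ (m-1-k)) + β * (motzkin β γ k * eseq β γ (m-k))
          = γ * (motzkin β γ k * motzkin β γ (m-1-k)) := by
        intro k hk
        have hk' := Finset.mem_range.mp hk
        have h1 : eseq β γ (m-k) = γ * hseq β γ (m-k) := eseq_eq_hseq β γ _ (by omega)
        have h2 : m - k = (m-1-k) + 1 := by omega
        have h3 := ih (m-1-k) (by omega)
        rw [← h2] at h3
        calc γ * (motzkin β γ k * eseq β γ (m-1-k)) + β * (motzkin β γ k * eseq β γ (m-k))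
            = γ * motzkin β γ k * (eseq β γ (m-1-k) + β * hseq β γ (m-k)) := by
              rw [h1]; ring
          _ = γ * (motzkin β γ k * motzkin β γ (m-1-k)) := by rw [h3]; ring
      have e0 : eseq β γ 0 = 1 := by simp [eseq]
      calc γ * (∑ k ∈ Finset.range m, motzkin β γ k * eseq β γ (m-1-k))
            + β * (motzkin β γ m * eseq β γ 0 + ∑ k ∈ Finset.range m, motzkin β γ k * eseq β γ (m - k))
          = β * (motzkin β γ m * eseq β γ 0)
            + ((∑ k ∈ Finset.range m, γ * (motzkin β γ k * eseq β γ (m-1-k)))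
              + (∑ k ∈ Finset.range m, β * (motzkin β γ k * eseq β γ (m-k)))) := by
            simp only [Finset.mul_sum, mul_add]; ring
        _ = β * (motzkin β γ m * eseq β γ 0)
            + ∑ k ∈ Finset.range m, (γ * (motzkin β γ k * eseq β γ (m-1-k)) + β * (motzkin β γ k * eseq β γ (m-k))) := by
            rw [← Finset.sum_add_distrib]
        _ = β * motzkin β γ m + γ * ∑ k ∈ Finset.range m, motzkin β γ k * motzkin β γ (m-1-k) := by
            rw [Finset.sum_congr rfl main, ← Finset.mul_sum, e0, mul_one]

namespace S15
variable {n : ℕ}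

/-- partition of a finset `s` -/
def PartOn (s : Finset (Fin n)) (σ : Finset (Finset (Fin n))) : Prop :=
  (∀ B ∈ σ, B.Nonempty) ∧ (∀ B ∈ σ, B ⊆ s) ∧ ∀ i ∈ s, ∃! B, B ∈ σ ∧ i ∈ B

lemma PartOn.block_eq {s : Finset (Fin n)} {σ : Finset (Finset (Fin n))} (h : PartOn s σ) {B C : Finset (Fin n)} {x : Fin n}
    (hB : B ∈ σ) (hC : C ∈ σ) (hxB : x ∈ B) (hxC : x ∈ C) : B = C := by
  have hx : x ∈ s := h.2.1 B hB hxB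
  obtain ⟨D, _, hun⟩ := h.2.2 x hx
  rw [hun B ⟨hB, hxB⟩, hun C ⟨hC, hxC⟩]

lemma PartOn.biUnion_eq {s : Finset (Fin n)} {σ : Finset (Finset (Fin n))} (h : PartOn s σ) : σ.biUnion id = s := by
  ext x
  simp only [Finset.mem_biUnion, id]
  constructor
  · rintro ⟨B, hB, hxB⟩; exact h.2.1 B hB hxB
  · intro hx; obtain ⟨B, ⟨hB, hxB⟩, _⟩ := h.2.2 x hx; exact ⟨B, hB, hxB⟩

lemma PartOn.sum_card {s : Finset (Fin n)} {σ : Finset (Finset (Fin n))} (h : PartOn s σ) : ∑ B ∈ σ, B.card = s.card := by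
  have hd : ∀ B ∈ σ, ∀ C ∈ σ, B ≠ C → Disjoint (id B) (id C) := by
    intro B hB C hC hne
    rw [Finset.disjoint_left]
    intro x hxB hxC
    exact hne (h.block_eq hB hC hxB hxC)
  rw [← h.biUnion_eq, Finset.card_biUnion hd]
  rfl

lemma PartOn.two_mul_card_le {s : Finset (Fin n)} {σ : Finset (Finset (Fin n))} (h : PartOn s σ) (hns : ∀ B ∈ σ, B.card ≠ 1) :
    2 * σ.card ≤ s.card := by
  rw [← h.sum_card]
  calc 2 * σ.card = ∑ _B ∈ σ, 2 := by rw [Finset.sum_const, smul_eq_mul, mul_comm]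
  _ ≤ ∑ B ∈ σ, B.card := by
      apply Finset.sum_le_sum
      intro B hB
      have h1 := Finset.card_pos.mpr (h.1 B hB)
      have h2 := hns B hB
      omega

lemma PartOn.card_le {s : Finset (Fin n)} {σ π : Finset (Finset (Fin n))} (h : PartOn s σ) (hπ : PartOn s π)
    (href : ∀ B ∈ σ, ∃ C ∈ π, B ⊆ C) : π.card ≤ σ.card := by
  classical
  apply Finset.card_le_card_of_surjOn (fun B => π.sup fun U => if B ⊆ U then U else ∅)
  intro U hU
  obtain ⟨x, hx⟩ := hπ.1 U hU
  have hxs : x ∈ s := hπ.2.1 U hU hx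
  obtain ⟨B, ⟨hB, hxB⟩, _⟩ := h.2.2 x hxs
  obtain ⟨C, hC, hBC⟩ := href B hB
  have hCU : C = U := hπ.block_eq hC hU (hBC hxB) hx
  subst hCU
  refine ⟨B, hB, ?_⟩
  simp only
  apply le_antisymm
  · apply Finset.sup_le
    intro V hV
    by_cases hBV : B ⊆ V
    · rw [if_pos hBV]
      exact le_of_eq (hπ.block_eq hV hC (hBV hxB) (hBC hxB))
    · rw [if_neg hBV]; exact Finset.empty_subset _
  · have := Finset.le_sup (f := fun U => if B ⊆ U then U else ∅) hC
    simpa [hBC] using this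

def blockOf (σ : Finset (Finset (Fin n))) (x : Fin n) : Finset (Fin n) :=
  σ.sup fun B => if x ∈ B then B else ∅

lemma blockOf_eq {s : Finset (Fin n)} {σ : Finset (Finset (Fin n))} (h : PartOn s σ) {B : Finset (Fin n)} {x : Fin n}
    (hB : B ∈ σ) (hx : x ∈ B) : blockOf σ x = B := by
  apply le_antisymm
  · apply Finset.sup_le
    intro C hC
    by_cases hxC : x ∈ C
    · rw [if_pos hxC]; exact le_of_eq (h.block_eq hC hB hxC hx)
    · rw [if_neg hxC]; exact Finset.empty_subset _
  · have := Finset.le_sup (f := fun B => if x ∈ B then B else ∅) hB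
    simpa [hx, blockOf] using this

lemma blockOf_mem {s : Finset (Fin n)} {σ : Finset (Finset (Fin n))} (h : PartOn s σ) {x : Fin n} (hx : x ∈ s) :
    blockOf σ x ∈ σ ∧ x ∈ blockOf σ x := by
  obtain ⟨B, ⟨hB, hxB⟩, _⟩ := h.2.2 x hx
  rw [blockOf_eq h hB hxB]; exact ⟨hB, hxB⟩

lemma nc_subset {σ τ : Finset (Finset (Fin n))} (hsub : σ ⊆ τ) (h : IsNoncrossing τ) :
    IsNoncrossing σ := by
  intro ⟨U, hU, V, hV, hx⟩
  exact h ⟨U, hsub hU, V, hsub hV, hx⟩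

lemma partOn_union {A B : Finset (Fin n)} {σ₁ σ₂ : Finset (Finset (Fin n))} (hd : Disjoint A B)
    (h1 : PartOn A σ₁) (h2 : PartOn B σ₂) : PartOn (A ∪ B) (σ₁ ∪ σ₂) := by
  refine ⟨?_, ?_, ?_⟩
  · intro C hC
    rcases Finset.mem_union.mp hC with h | h
    · exact h1.1 C h
    · exact h2.1 C h
  · intro C hC
    rcases Finset.mem_union.mp hC with h | h
    · exact (h1.2.1 C h).trans Finset.subset_union_left
    · exact (h2.2.1 C h).trans Finset.subset_union_right
  · intro x hx
    have key : ∀ C ∈ σ₁ ∪ σ₂, x ∈ C → x ∈ A → C ∈ σ₁ := by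
      intro C hC hxC hxA
      rcases Finset.mem_union.mp hC with h | h
      · exact h
      · exact absurd (Finset.disjoint_left.mp hd hxA (h2.2.1 C h hxC)) not_false
    have key2 : ∀ C ∈ σ₁ ∪ σ₂, x ∈ C → x ∈ B → C ∈ σ₂ := by
      intro C hC hxC hxB
      rcases Finset.mem_union.mp hC with h | h
      · exact absurd (Finset.disjoint_right.mp hd hxB (h1.2.1 C h hxC)) not_false
      · exact h
    rcases Finset.mem_union.mp hx with hxA | hxB
    · obtain ⟨C, ⟨hC, hxC⟩, hun⟩ := h1.2.2 x hxA
      exact ⟨C, ⟨Finset.mem_union_left _ hC, hxC⟩,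
        fun D ⟨hD, hxD⟩ => hun D ⟨key D hD hxD hxA, hxD⟩⟩
    · obtain ⟨C, ⟨hC, hxC⟩, hun⟩ := h2.2.2 x hxB
      exact ⟨C, ⟨Finset.mem_union_right _ hC, hxC⟩,
        fun D ⟨hD, hxD⟩ => hun D ⟨key2 D hD hxD hxB, hxD⟩⟩

lemma parts_disjoint {A B : Finset (Fin n)} {σ₁ σ₂ : Finset (Finset (Fin n))} (hd : Disjoint A B)
    (h1 : PartOn A σ₁) (h2 : PartOn B σ₂) : Disjoint σ₁ σ₂ := by
  rw [Finset.disjoint_left]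
  intro C hC1 hC2
  obtain ⟨x, hx⟩ := h1.1 C hC1
  exact absurd (Finset.disjoint_left.mp hd (h1.2.1 C hC1 hx) (h2.2.1 C hC2 hx)) not_false

/-- noncrossing union when grounds are order-separated -/
lemma nc_union_sep {A B : Finset (Fin n)} {σ₁ σ₂ : Finset (Finset (Fin n))} (hsep : ∀ x ∈ A, ∀ y ∈ B, x < y)
    (g1 : ∀ C ∈ σ₁, C ⊆ A) (g2 : ∀ C ∈ σ₂, C ⊆ B)
    (h1 : IsNoncrossing σ₁) (h2 : IsNoncrossing σ₂) : IsNoncrossing (σ₁ ∪ σ₂) := by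
  rintro ⟨U, hU, V, hV, hne, i, hi, k, hk, j, hj, l, hl, h₁, h₂, h₃⟩
  rcases Finset.mem_union.mp hU with hU1 | hU2 <;> rcases Finset.mem_union.mp hV with hV1 | hV2
  · exact h1 ⟨U, hU1, V, hV1, hne, i, hi, k, hk, j, hj, l, hl, h₁, h₂, h₃⟩
  · exact absurd (hsep k (g1 U hU1 hk) j (g2 V hV2 hj)) (not_lt.mpr h₂.le)
  · exact absurd (hsep j (g1 V hV1 hj) i (g2 U hU2 hi)) (not_lt.mpr h₁.le)
  · exact h2 ⟨U, hU2, V, hV2, hne, i, hi, k, hk, j, hj, l, hl, h₁, h₂, h₃⟩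



def NoSing (σ : Finset (Finset (Fin n))) : Prop := ∀ B ∈ σ, B.card ≠ 1

def Eset (s : Finset (Fin n)) : Finset (Finset (Finset (Fin n))) :=
  Finset.univ.filter fun σ => PartOn s σ ∧ IsNoncrossing σ ∧ NoSing σ

def Fset (s : Finset (Fin n)) : Finset (Finset (Finset (Fin n))) :=
  Finset.univ.filter fun σ => PartOn s σ ∧ IsNoncrossing σ ∧ NoSing σ ∧
    ∃ C ∈ σ, ∃ u ∈ C, ∃ v ∈ C, (∀ x ∈ s, u ≤ x) ∧ (∀ x ∈ s, x ≤ v)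

def Gset (s : Finset (Fin n)) : Finset (Finset (Finset (Fin n))) :=
  Finset.univ.filter fun σ => PartOn s σ ∧ IsNoncrossing σ ∧
    ∀ B ∈ σ, B.card = 1 → ∃ x ∈ B, ∀ y ∈ s, x ≤ y

lemma mem_Eset {s : Finset (Fin n)} {σ : Finset (Finset (Fin n))} :
    σ ∈ Eset s ↔ PartOn s σ ∧ IsNoncrossing σ ∧ NoSing σ := by simp [Eset]

lemma mem_Fset {s : Finset (Fin n)} {σ : Finset (Finset (Fin n))} :
    σ ∈ Fset s ↔ PartOn s σ ∧ IsNoncrossing σ ∧ NoSing σ ∧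
      ∃ C ∈ σ, ∃ u ∈ C, ∃ v ∈ C, (∀ x ∈ s, u ≤ x) ∧ (∀ x ∈ s, x ≤ v) := by simp [Fset]

lemma mem_Gset {s : Finset (Fin n)} {σ : Finset (Finset (Fin n))} :
    σ ∈ Gset s ↔ PartOn s σ ∧ IsNoncrossing σ ∧
      ∀ B ∈ σ, B.card = 1 → ∃ x ∈ B, ∀ y ∈ s, x ≤ y := by simp [Gset]

def Efun (β γ : ℂ) (s : Finset (Fin n)) : ℂ :=
  ∑ σ ∈ Eset s, β ^ (s.card - 2 * σ.card) * γ ^ σ.card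

def Ffun (β γ : ℂ) (s : Finset (Fin n)) : ℂ :=
  ∑ σ ∈ Fset s, β ^ (s.card - 2 * σ.card) * γ ^ (σ.card - 1)

def Gfun (β γ : ℂ) (s : Finset (Fin n)) : ℂ :=
  ∑ σ ∈ Gset s, β ^ (s.card + 1 - 2 * σ.card) * γ ^ (σ.card - 1)

lemma nc_empty : IsNoncrossing (∅ : Finset (Finset (Fin n))) := by
  rintro ⟨U, hU, _⟩; exact absurd hU (Finset.notMem_empty _)

lemma nc_single (B : Finset (Fin n)) : IsNoncrossing ({B} : Finset (Finset (Fin n))) := by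
  rintro ⟨U, hU, V, hV, hne, _⟩
  rw [Finset.mem_singleton] at hU hV
  exact hne (hU.trans hV.symm)

lemma partOn_empty_iff {σ : Finset (Finset (Fin n))} : PartOn ∅ σ ↔ σ = ∅ := by
  constructor
  · intro h
    rw [Finset.eq_empty_iff_forall_notMem]
    intro B hB
    obtain ⟨x, hx⟩ := h.1 B hB
    exact absurd (h.2.1 B hB hx) (Finset.notMem_empty x)
  · rintro rfl
    exact ⟨by simp, by simp, by simp⟩

lemma partOn_singleton_iff {x : Fin n} {σ : Finset (Finset (Fin n))} :
    PartOn {x} σ ↔ σ = {{x}} := by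
  constructor
  · intro h
    obtain ⟨B, ⟨hB, hxB⟩, hun⟩ := h.2.2 x (Finset.mem_singleton_self x)
    have hBx : B = {x} := by
      apply Finset.Subset.antisymm (h.2.1 B hB)
      simp [hxB]
    apply Finset.eq_singleton_iff_unique_mem.mpr
    refine ⟨hBx ▸ hB, ?_⟩
    intro C hC
    obtain ⟨y, hy⟩ := h.1 C hC
    have hyx : y = x := Finset.mem_singleton.mp (h.2.1 C hC hy)
    subst hyx
    rw [← hBx]
    exact (h.block_eq hC hB hy hxB)
  · rintro rfl
    refine ⟨by simp, by simp, ?_⟩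
    intro i hi
    rw [Finset.mem_singleton] at hi
    subst hi
    exact ⟨{i}, by simp, by simp⟩

lemma Eset_empty : Eset (∅ : Finset (Fin n)) = {∅} := by
  ext σ
  rw [mem_Eset, Finset.mem_singleton]
  constructor
  · intro ⟨h, _, _⟩; exact partOn_empty_iff.mp h
  · rintro rfl
    exact ⟨partOn_empty_iff.mpr rfl, nc_empty, by simp [NoSing]⟩

lemma Eset_singleton (x : Fin n) : Eset ({x} : Finset (Fin n)) = ∅ := by
  rw [Finset.eq_empty_iff_forall_notMem]
  intro σ hσ
  rw [mem_Eset] at hσ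
  obtain ⟨h, _, hns⟩ := hσ
  have := partOn_singleton_iff.mp h
  subst this
  exact hns {x} (by simp) (by simp)

lemma Gset_singleton (x : Fin n) : Gset ({x} : Finset (Fin n)) = {{{x}}} := by
  ext σ
  rw [mem_Gset, Finset.mem_singleton]
  constructor
  · intro ⟨h, _, _⟩; exact partOn_singleton_iff.mp h
  · rintro rfl
    refine ⟨partOn_singleton_iff.mpr rfl, nc_single _, ?_⟩
    intro B hB _
    rw [Finset.mem_singleton] at hB
    subst hB
    exact ⟨x, by simp⟩

lemma filter_le_card_add {s : Finset (Fin n)} (z : Fin n) :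
    (s.filter fun x => x ≤ z).card + (s.filter fun x => z < x).card = s.card := by
  have h2 : (s.filter fun x => z < x) = s.filter fun x => ¬ x ≤ z := by
    apply Finset.filter_congr
    intro x _
    rw [not_le]
  rw [h2]
  exact Finset.card_filter_add_card_filter_not _







lemma Gsum_split {s : Finset (Fin n)} (hs : s.Nonempty) (w : ℕ → ℂ) :
    ∑ σ ∈ Gset s, w σ.card
      = (∑ σ ∈ Eset (s.erase (s.min' hs)), w (σ.card + 1)) + ∑ σ ∈ Eset s, w σ.card := by
  set a := s.min' hs with ha
  have ham : a ∈ s := s.min'_mem hs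
  rw [← Finset.sum_filter_add_sum_filter_not (Gset s) (fun σ => ({a} : Finset (Fin n)) ∈ σ)]
  congr 1
  · -- singleton block at the minimum : bijection with Eset (s.erase a)
    refine Finset.sum_bij' (fun σ _ => σ.erase ({a} : Finset (Fin n)))
      (fun τ _ => insert ({a} : Finset (Fin n)) τ) ?_ ?_ ?_ ?_ ?_
    -- hi
    · intro σ hσ
      obtain ⟨hσG, hmem⟩ := Finset.mem_filter.mp hσ
      obtain ⟨hp, hnc, hg⟩ := mem_Gset.mp hσG
      rw [mem_Eset]
      refine ⟨⟨?_, ?_, ?_⟩, nc_subset (Finset.erase_subset _ _) hnc, ?_⟩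
      · intro B hB; exact hp.1 B (Finset.mem_of_mem_erase hB)
      · intro B hB
        obtain ⟨hBne, hBσ⟩ := Finset.mem_erase.mp hB
        have haB : a ∉ B := fun haB => hBne (hp.block_eq hBσ hmem haB (Finset.mem_singleton_self a))
        exact Finset.subset_erase.mpr ⟨hp.2.1 B hBσ, haB⟩
      · intro x hx
        obtain ⟨hxa, hxs⟩ := Finset.mem_erase.mp hx
        obtain ⟨B, ⟨hB, hxB⟩, hun⟩ := hp.2.2 x hxs
        have hBne : B ≠ {a} := fun h => hxa (Finset.mem_singleton.mp (h ▸ hxB))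
        exact ⟨B, ⟨Finset.mem_erase.mpr ⟨hBne, hB⟩, hxB⟩,
          fun D ⟨hD, hxD⟩ => hun D ⟨Finset.mem_of_mem_erase hD, hxD⟩⟩
      · intro B hB hcard
        obtain ⟨hBne, hBσ⟩ := Finset.mem_erase.mp hB
        obtain ⟨x, hxB, hxmin⟩ := hg B hBσ hcard
        have hxa : x = a := le_antisymm (hxmin a ham) (s.min'_le x (hp.2.1 B hBσ hxB))
        obtain ⟨c, hc⟩ := Finset.card_eq_one.mp hcard
        subst hc
        rw [Finset.mem_singleton] at hxB
        exact hBne (by rw [← hxB, hxa])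
    -- hj
    · intro τ hτ
      obtain ⟨hp, hnc, hns⟩ := mem_Eset.mp hτ
      have hnotin : ({a} : Finset (Fin n)) ∉ τ := fun h => hns _ h (Finset.card_singleton a)
      rw [Finset.mem_filter]
      constructor
      · rw [mem_Gset]
        have hd : Disjoint ({a} : Finset (Fin n)) (s.erase a) := by
          simp [Finset.disjoint_left]
        have hpu := partOn_union hd (partOn_singleton_iff.mpr rfl) hp
        have hgr : ({a} : Finset (Fin n)) ∪ s.erase a = s := by
          rw [← Finset.insert_eq, Finset.insert_erase ham]
        have hbl : ({({a} : Finset (Fin n))} : Finset (Finset (Fin n))) ∪ τ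
            = insert ({a} : Finset (Fin n)) τ := by rw [Finset.insert_eq]
        rw [hgr, hbl] at hpu
        refine ⟨hpu, ?_, ?_⟩
        · have := nc_union_sep (A := ({a} : Finset (Fin n))) (B := s.erase a)
            (σ₁ := {({a} : Finset (Fin n))}) (σ₂ := τ) ?_ ?_ hp.2.1 (nc_single _) hnc
          · rwa [hbl] at this
          · intro x hx y hy
            rw [Finset.mem_singleton] at hx
            subst hx
            obtain ⟨hya, hys⟩ := Finset.mem_erase.mp hy
            exact lt_of_le_of_ne (s.min'_le y hys) (Ne.symm hya)
          · intro C hC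
            rw [Finset.mem_singleton] at hC
            subst hC
            exact Finset.Subset.refl _
        · intro B hB hcard
          rcases Finset.mem_insert.mp hB with rfl | hBτ
          · exact ⟨a, Finset.mem_singleton_self a, fun y hy => s.min'_le y hy⟩
          · exact absurd hcard (hns B hBτ)
      · exact Finset.mem_insert_self _ _
    -- left inverse
    · intro σ hσ
      exact Finset.insert_erase (Finset.mem_filter.mp hσ).2
    -- right inverse
    · intro τ hτ
      obtain ⟨hp, _, hns⟩ := mem_Eset.mp hτ
      apply Finset.erase_insert
      intro h
      have := hp.2.1 _ h (Finset.mem_singleton_self a)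
      exact absurd this (fun h2 => (Finset.mem_erase.mp h2).1 rfl)
    -- weights
    · intro σ hσ
      obtain ⟨_, hmem⟩ := Finset.mem_filter.mp hσ
      rw [Finset.card_erase_add_one hmem]
  · -- no singleton at the minimum : equal to Eset s
    apply Finset.sum_congr _ (fun _ _ => rfl)
    ext σ
    rw [Finset.mem_filter, mem_Gset, mem_Eset]
    constructor
    · rintro ⟨⟨hp, hnc, hg⟩, hnot⟩
      refine ⟨hp, hnc, ?_⟩
      intro B hB hcard
      obtain ⟨x, hxB, hxmin⟩ := hg B hB hcard
      have hxa : x = a := le_antisymm (hxmin a ham) (s.min'_le x (hp.2.1 B hB hxB))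
      obtain ⟨c, hc⟩ := Finset.card_eq_one.mp hcard
      subst hc
      rw [Finset.mem_singleton] at hxB
      apply hnot
      rw [← hxB, hxa] at hB
      exact hB
    · rintro ⟨hp, hnc, hns⟩
      exact ⟨⟨hp, hnc, fun B hB hcard => absurd hcard (hns B hB)⟩,
        fun h => hns _ h (Finset.card_singleton a)⟩

lemma nc_replace {σ : Finset (Finset (Fin n))} {W W' : Finset (Fin n)}
    (hW : W ∈ σ) (hsub : W' ⊆ W) (hnc : IsNoncrossing σ) :
    IsNoncrossing (insert W' (σ.erase W)) := by
  rintro ⟨U, hU, V, hV, hne, i, hi, k, hk, j, hj, l, hl, h1, h2, h3⟩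
  by_cases hUW : U = W'
  · subst hUW
    have hVτ : V ∈ σ.erase W := by
      rcases Finset.mem_insert.mp hV with h | h
      · exact absurd h (Ne.symm hne)
      · exact h
    exact hnc ⟨W, hW, V, Finset.mem_of_mem_erase hVτ, Ne.symm (Finset.mem_erase.mp hVτ).1,
      i, hsub hi, k, hsub hk, j, hj, l, hl, h1, h2, h3⟩
  · have hUτ : U ∈ σ.erase W := (Finset.mem_insert.mp hU).resolve_left hUW
    by_cases hVW : V = W'
    · subst hVW
      exact hnc ⟨U, Finset.mem_of_mem_erase hUτ, W, hW, (Finset.mem_erase.mp hUτ).1,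
        i, hi, k, hk, j, hsub hj, l, hsub hl, h1, h2, h3⟩
    · have hVτ : V ∈ σ.erase W := (Finset.mem_insert.mp hV).resolve_left hVW
      exact hnc ⟨U, Finset.mem_of_mem_erase hUτ, V, Finset.mem_of_mem_erase hVτ, hne,
        i, hi, k, hk, j, hj, l, hl, h1, h2, h3⟩

lemma Fset_endpoints {s : Finset (Fin n)} (hs : s.Nonempty) {σ : Finset (Finset (Fin n))}
    (hσ : σ ∈ Fset s) :
    blockOf σ (s.max' hs) ∈ σ ∧ s.max' hs ∈ blockOf σ (s.max' hs)
      ∧ s.min' hs ∈ blockOf σ (s.max' hs) := by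
  obtain ⟨hp, _, _, C, hC, u, huC, v, hvC, humin, hvmax⟩ := mem_Fset.mp hσ
  have hu : u = s.min' hs :=
    le_antisymm (humin _ (s.min'_mem hs)) (s.min'_le u (hp.2.1 C hC huC))
  have hv : v = s.max' hs :=
    le_antisymm (s.le_max' v (hp.2.1 C hC hvC)) (hvmax _ (s.max'_mem hs))
  have hbC : s.max' hs ∈ C := hv ▸ hvC
  have heq := blockOf_eq hp hC hbC
  rw [heq]
  exact ⟨hC, hbC, hu ▸ huC⟩

lemma erase_block_not_mem {s : Finset (Fin n)} {σ : Finset (Finset (Fin n))}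
    (hp : PartOn s σ) {W : Finset (Fin n)} (hW : W ∈ σ) {b : Fin n} (hb : b ∈ W)
    (hne : (W.erase b).Nonempty) : W.erase b ∉ σ := by
  intro hmem
  obtain ⟨x, hx⟩ := hne
  have heq : W.erase b = W := hp.block_eq hmem hW hx (Finset.mem_of_mem_erase hx)
  have hm : b ∈ W.erase b := heq.symm ▸ hb
  exact (Finset.mem_erase.mp hm).1 rfl

lemma Fset_to_Gset {s : Finset (Fin n)} (hs : s.Nonempty) (h2 : 2 ≤ s.card)
    {σ : Finset (Finset (Fin n))} (hσ : σ ∈ Fset s) :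
    insert ((blockOf σ (s.max' hs)).erase (s.max' hs)) (σ.erase (blockOf σ (s.max' hs)))
      ∈ Gset (s.erase (s.max' hs)) := by
  obtain ⟨hp, hnc, hns, _⟩ := mem_Fset.mp hσ
  obtain ⟨hW, hbW, haW⟩ := Fset_endpoints hs hσ
  set b := s.max' hs with hb
  set a := s.min' hs with ha
  set W := blockOf σ b with hWdef
  have hab : a ≠ b := ne_of_lt (s.min'_lt_max'_of_card (by omega))
  have haWb : a ∈ W.erase b := Finset.mem_erase.mpr ⟨hab, haW⟩
  rw [mem_Gset]
  refine ⟨⟨?_, ?_, ?_⟩, ?_, ?_⟩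
  · -- nonempty blocks
    intro B hB
    rcases Finset.mem_insert.mp hB with rfl | hB
    · exact ⟨a, haWb⟩
    · exact hp.1 B (Finset.mem_of_mem_erase hB)
  · -- blocks inside s.erase b
    intro B hB
    rcases Finset.mem_insert.mp hB with rfl | hB
    · exact Finset.erase_subset_erase b (hp.2.1 W hW)
    · obtain ⟨hBne, hBσ⟩ := Finset.mem_erase.mp hB
      refine Finset.subset_erase.mpr ⟨hp.2.1 B hBσ, fun hbB => hBne (hp.block_eq hBσ hW hbB hbW)⟩
  · -- covering
    intro x hx
    obtain ⟨hxb, hxs⟩ := Finset.mem_erase.mp hx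
    obtain ⟨B, ⟨hB, hxB⟩, _⟩ := hp.2.2 x hxs
    by_cases hBW : B = W
    · refine ⟨W.erase b, ⟨Finset.mem_insert_self _ _, Finset.mem_erase.mpr ⟨hxb, hBW ▸ hxB⟩⟩, ?_⟩
      rintro D ⟨hD, hxD⟩
      rcases Finset.mem_insert.mp hD with rfl | hD
      · rfl
      · exact absurd ((Finset.mem_erase.mp hD).1 (hp.block_eq (Finset.mem_of_mem_erase hD) hW hxD (hBW ▸ hxB))) not_false
    · refine ⟨B, ⟨Finset.mem_insert_of_mem (Finset.mem_erase.mpr ⟨hBW, hB⟩), hxB⟩, ?_⟩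
      rintro D ⟨hD, hxD⟩
      rcases Finset.mem_insert.mp hD with rfl | hD
      · exact absurd (hp.block_eq hW hB (Finset.mem_of_mem_erase hxD) hxB) (Ne.symm hBW)
      · exact hp.block_eq (Finset.mem_of_mem_erase hD) hB hxD hxB
  · -- noncrossing
    exact nc_replace hW (Finset.erase_subset _ _) hnc
  · -- singletons only at the minimum
    intro B hB hcard
    rcases Finset.mem_insert.mp hB with rfl | hB
    · refine ⟨a, haWb, ?_⟩
      intro y hy
      exact s.min'_le y (Finset.mem_of_mem_erase hy)
    · exact absurd hcard (hns B (Finset.mem_of_mem_erase hB))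

lemma Gset_to_Fset {s : Finset (Fin n)} (hs : s.Nonempty) (h2 : 2 ≤ s.card)
    {τ : Finset (Finset (Fin n))} (hτ : τ ∈ Gset (s.erase (s.max' hs))) :
    insert (insert (s.max' hs) (blockOf τ (s.min' hs))) (τ.erase (blockOf τ (s.min' hs)))
      ∈ Fset s := by
  obtain ⟨hp, hnc, hg⟩ := mem_Gset.mp hτ
  set b := s.max' hs with hb
  set a := s.min' hs with ha
  have hab : a ≠ b := ne_of_lt (s.min'_lt_max'_of_card (by omega))
  have haeb : a ∈ s.erase b := Finset.mem_erase.mpr ⟨hab, s.min'_mem hs⟩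
  obtain ⟨hW', haW'⟩ := blockOf_mem hp haeb
  set W' := blockOf τ a with hW'def
  set Wb := insert b W' with hWb
  have hbnW' : b ∉ W' := fun h => (Finset.mem_erase.mp (hp.2.1 W' hW' h)).1 rfl
  have hsub' : ∀ B ∈ τ.erase W', B ⊆ s ∧ b ∉ B ∧ a ∉ B := by
    intro B hB
    obtain ⟨hBne, hBτ⟩ := Finset.mem_erase.mp hB
    refine ⟨(hp.2.1 B hBτ).trans (Finset.erase_subset _ _), ?_, ?_⟩
    · exact fun h => (Finset.mem_erase.mp (hp.2.1 B hBτ h)).1 rfl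
    · exact fun h => hBne (hp.block_eq hBτ hW' h haW')
  rw [mem_Fset]
  refine ⟨⟨?_, ?_, ?_⟩, ?_, ?_, ?_⟩
  · intro B hB
    rcases Finset.mem_insert.mp hB with rfl | hB
    · exact ⟨b, Finset.mem_insert_self _ _⟩
    · exact hp.1 B (Finset.mem_of_mem_erase hB)
  · intro B hB
    rcases Finset.mem_insert.mp hB with rfl | hB
    · exact Finset.insert_subset (s.max'_mem hs) ((hp.2.1 W' hW').trans (Finset.erase_subset _ _))
    · exact ((hp.2.1 B (Finset.mem_of_mem_erase hB)).trans (Finset.erase_subset _ _))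
  · intro x hxs
    by_cases hxb : x = b
    · subst hxb
      refine ⟨Wb, ⟨Finset.mem_insert_self _ _, Finset.mem_insert_self _ _⟩, ?_⟩
      rintro D ⟨hD, hxD⟩
      rcases Finset.mem_insert.mp hD with rfl | hD
      · rfl
      · exact absurd hxD (hsub' D hD).2.1
    · have hxeb : x ∈ s.erase b := Finset.mem_erase.mpr ⟨hxb, hxs⟩
      obtain ⟨B, ⟨hB, hxB⟩, _⟩ := hp.2.2 x hxeb
      by_cases hBW' : B = W'
      · subst hBW'
        refine ⟨Wb, ⟨Finset.mem_insert_self _ _, Finset.mem_insert_of_mem hxB⟩, ?_⟩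
        rintro D ⟨hD, hxD⟩
        rcases Finset.mem_insert.mp hD with rfl | hD
        · rfl
        · exact absurd ((Finset.mem_erase.mp hD).1 (hp.block_eq (Finset.mem_of_mem_erase hD) hB hxD hxB)) not_false
      · refine ⟨B, ⟨Finset.mem_insert_of_mem (Finset.mem_erase.mpr ⟨hBW', hB⟩), hxB⟩, ?_⟩
        rintro D ⟨hD, hxD⟩
        rcases Finset.mem_insert.mp hD with rfl | hD
        · rcases Finset.mem_insert.mp hxD with rfl | hxD'
          · exact absurd rfl hxb
          · exact absurd (hp.block_eq hW' hB hxD' hxB) (Ne.symm hBW')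
        · exact hp.block_eq (Finset.mem_of_mem_erase hD) hB hxD hxB
  · -- noncrossing
    rintro ⟨U, hU, V, hV, hne, i, hi, k, hk, j, hj, l, hl, h1, h2', h3⟩
    have hle : ∀ x : Fin n, x ∈ s → x ≤ b := fun x hx => s.le_max' x hx
    have hblocks : ∀ B ∈ insert Wb (τ.erase W'), B ⊆ s := by
      intro B hB
      rcases Finset.mem_insert.mp hB with rfl | hB
      · exact Finset.insert_subset (s.max'_mem hs) ((hp.2.1 W' hW').trans (Finset.erase_subset _ _))
      · exact (hsub' B hB).1
    by_cases hUW : U = Wb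
    · subst hUW
      have hVτ : V ∈ τ.erase W' := (Finset.mem_insert.mp hV).resolve_left (fun h => hne h.symm)
      -- k < l ≤ b so i,k ≠ b hence i,k ∈ W'
      have hlb : l ≤ b := hle l (hblocks V (Finset.mem_insert_of_mem hVτ) hl)
      have hkW' : k ∈ W' := by
        rcases Finset.mem_insert.mp hk with rfl | h
        · exact absurd (lt_of_lt_of_le h3 hlb) (lt_irrefl b)
        · exact h
      have hiW' : i ∈ W' := by
        rcases Finset.mem_insert.mp hi with rfl | h
        · exact absurd (lt_trans (lt_trans h1 h2') (lt_of_lt_of_le h3 hlb)) (lt_irrefl b)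
        · exact h
      exact hnc ⟨W', hW', V, Finset.mem_of_mem_erase hVτ,
        Ne.symm (Finset.mem_erase.mp hVτ).1, i, hiW', k, hkW', j, hj, l, hl, h1, h2', h3⟩
    · have hUτ : U ∈ τ.erase W' := (Finset.mem_insert.mp hU).resolve_left hUW
      by_cases hVW : V = Wb
      · subst hVW
        by_cases hlb : l = b
        · -- use a and j in W' against i,k in U
          subst hlb
          have hjW' : j ∈ W' := by
            rcases Finset.mem_insert.mp hj with rfl | h
            · exact absurd h2' (not_lt.mpr (hle k (hblocks U (Finset.mem_insert_of_mem hUτ) hk)))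
            · exact h
          have haU : a ∉ U := (hsub' U hUτ).2.2
          have hai : a < i :=
            lt_of_le_of_ne (s.min'_le i (hblocks U (Finset.mem_insert_of_mem hUτ) hi))
              (fun h => haU (h ▸ hi))
          exact hnc ⟨W', hW', U, Finset.mem_of_mem_erase hUτ, Ne.symm (Finset.mem_erase.mp hUτ).1,
            a, haW', j, hjW', i, hi, k, hk, hai, h1, h2'⟩
        · have hjW' : j ∈ W' := by
            rcases Finset.mem_insert.mp hj with rfl | h
            · have hlle : l ≤ b := hle l (hblocks Wb (Finset.mem_insert_self _ _) hl)
              exact absurd (lt_of_lt_of_le (lt_trans h2' h3) hlle) (lt_irrefl b)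
            · exact h
          have hlW' : l ∈ W' := (Finset.mem_insert.mp hl).resolve_left hlb
          exact hnc ⟨U, Finset.mem_of_mem_erase hUτ, W', hW', (Finset.mem_erase.mp hUτ).1,
            i, hi, k, hk, j, hjW', l, hlW', h1, h2', h3⟩
      · have hVτ : V ∈ τ.erase W' := (Finset.mem_insert.mp hV).resolve_left hVW
        exact hnc ⟨U, Finset.mem_of_mem_erase hUτ, V, Finset.mem_of_mem_erase hVτ, hne,
          i, hi, k, hk, j, hj, l, hl, h1, h2', h3⟩
  · -- no singletons
    intro B hB
    rcases Finset.mem_insert.mp hB with rfl | hB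
    · intro hcard
      obtain ⟨c, hc⟩ := Finset.card_eq_one.mp hcard
      have hbc : b = c := Finset.mem_singleton.mp (hc ▸ Finset.mem_insert_self b W')
      have hac : a = c := Finset.mem_singleton.mp (hc ▸ Finset.mem_insert_of_mem haW')
      exact hab (hac.trans hbc.symm)
    · intro hcard
      obtain ⟨x, hxB, hxmin⟩ := hg B (Finset.mem_of_mem_erase hB) hcard
      have hxa : x = a := le_antisymm (hxmin a haeb)
        (s.min'_le x ((hsub' B hB).1 hxB))
      exact (hsub' B hB).2.2 (hxa ▸ hxB)
  · -- the F condition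
    exact ⟨Wb, Finset.mem_insert_self _ _, a, Finset.mem_insert_of_mem haW', b,
      Finset.mem_insert_self _ _, fun x hx => s.min'_le x hx, fun x hx => s.le_max' x hx⟩

lemma Fsum_split {s : Finset (Fin n)} (hs : s.Nonempty) (h2 : 2 ≤ s.card) (w : ℕ → ℂ) :
    ∑ σ ∈ Fset s, w σ.card = ∑ σ ∈ Gset (s.erase (s.max' hs)), w σ.card := by
  set b := s.max' hs with hb
  set a := s.min' hs with ha
  refine Finset.sum_bij'
    (fun σ _ => insert ((blockOf σ b).erase b) (σ.erase (blockOf σ b)))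
    (fun τ _ => insert (insert b (blockOf τ a)) (τ.erase (blockOf τ a))) ?_ ?_ ?_ ?_ ?_
  · exact fun σ hσ => Fset_to_Gset hs h2 hσ
  · exact fun τ hτ => Gset_to_Fset hs h2 hτ
  · -- left inverse
    intro σ hσ
    obtain ⟨hp, hnc, hns, _⟩ := mem_Fset.mp hσ
    obtain ⟨hW, hbW, haW⟩ := Fset_endpoints hs hσ
    have hab : a ≠ b := ne_of_lt (s.min'_lt_max'_of_card (by omega))
    have haWb : a ∈ (blockOf σ b).erase b := Finset.mem_erase.mpr ⟨hab, haW⟩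
    have hτG := Fset_to_Gset hs h2 hσ
    have hpτ := (mem_Gset.mp hτG).1
    have hblock : blockOf (insert ((blockOf σ b).erase b) (σ.erase (blockOf σ b))) a
        = (blockOf σ b).erase b :=
      blockOf_eq hpτ (Finset.mem_insert_self _ _) haWb
    simp only [hblock]
    have hnm : (blockOf σ b).erase b ∉ σ.erase (blockOf σ b) := fun hmem =>
      erase_block_not_mem hp hW hbW ⟨a, haWb⟩ (Finset.mem_of_mem_erase hmem)
    rw [Finset.insert_erase hbW, Finset.erase_insert hnm, Finset.insert_erase hW]
  · -- right inverse
    intro τ hτ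
    obtain ⟨hp, hnc, hg⟩ := mem_Gset.mp hτ
    have hab : a ≠ b := ne_of_lt (s.min'_lt_max'_of_card (by omega))
    have haeb : a ∈ s.erase b := Finset.mem_erase.mpr ⟨hab, s.min'_mem hs⟩
    obtain ⟨hW', haW'⟩ := blockOf_mem hp haeb
    have hbnW' : b ∉ blockOf τ a := fun h => (Finset.mem_erase.mp (hp.2.1 _ hW' h)).1 rfl
    have hσF := Gset_to_Fset hs h2 hτ
    have hpσ := (mem_Fset.mp hσF).1
    have hblock : blockOf (insert (insert b (blockOf τ a)) (τ.erase (blockOf τ a))) b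
        = insert b (blockOf τ a) :=
      blockOf_eq hpσ (Finset.mem_insert_self _ _) (Finset.mem_insert_self _ _)
    simp only [hblock]
    have hnm : insert b (blockOf τ a) ∉ τ.erase (blockOf τ a) := by
      intro hmem
      have := hp.2.1 _ (Finset.mem_of_mem_erase hmem) (Finset.mem_insert_self b _)
      exact (Finset.mem_erase.mp this).1 rfl
    rw [Finset.erase_insert hbnW', Finset.erase_insert hnm, Finset.insert_erase hW']
  · -- weights
    intro σ hσ
    obtain ⟨hp, hnc, hns, _⟩ := mem_Fset.mp hσ
    obtain ⟨hW, hbW, haW⟩ := Fset_endpoints hs hσ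
    have hab : a ≠ b := ne_of_lt (s.min'_lt_max'_of_card (by omega))
    have haWb : a ∈ (blockOf σ b).erase b := Finset.mem_erase.mpr ⟨hab, haW⟩
    have hnm : (blockOf σ b).erase b ∉ σ.erase (blockOf σ b) := fun hmem =>
      erase_block_not_mem hp hW hbW ⟨a, haWb⟩ (Finset.mem_of_mem_erase hmem)
    congr 1
    rw [Finset.card_insert_of_notMem hnm, Finset.card_erase_add_one hW]

lemma block_le_sep {s : Finset (Fin n)} {σ : Finset (Finset (Fin n))}
    (hp : PartOn s σ) (hnc : IsNoncrossing σ)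
    {W : Finset (Fin n)} (hW : W ∈ σ) {a z : Fin n} (haW : a ∈ W) (hzW : z ∈ W)
    (hmin : ∀ x ∈ s, a ≤ x) (hzmax : ∀ x ∈ W, x ≤ z) :
    ∀ B ∈ σ, ∀ x ∈ B, x ≤ z → B ⊆ s.filter (fun y => y ≤ z) := by
  intro B hB x hxB hxz y hyB
  rw [Finset.mem_filter]
  refine ⟨hp.2.1 B hB hyB, ?_⟩
  by_contra hyz
  rw [not_le] at hyz
  by_cases hBW : B = W
  · exact absurd (hzmax y (hBW ▸ hyB)) (not_le.mpr hyz)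
  · have haB : a ∉ B := fun h => hBW (hp.block_eq hB hW h haW)
    have hax : a < x := lt_of_le_of_ne (hmin x (hp.2.1 B hB hxB)) (fun h => haB (h ▸ hxB))
    have hxzlt : x < z := lt_of_le_of_ne hxz (fun h => hBW (hp.block_eq hB hW (h ▸ hxB) hzW))
    exact hnc ⟨W, hW, B, hB, fun h => hBW h.symm, a, haW, z, hzW, x, hxB, y, hyB,
      hax, hxzlt, hyz⟩

lemma ground_split (s : Finset (Fin n)) (z : Fin n) :
    (s.filter fun x => x ≤ z) ∪ (s.filter fun x => z < x) = s := by
  have h2 : (s.filter fun x => z < x) = s.filter fun x => ¬ x ≤ z :=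
    Finset.filter_congr (fun x _ => by rw [not_le])
  rw [h2]
  exact Finset.filter_union_filter_not_eq _ s

lemma ground_disj (s : Finset (Fin n)) (z : Fin n) :
    Disjoint (s.filter fun x => x ≤ z) (s.filter fun x => z < x) := by
  have h2 : (s.filter fun x => z < x) = s.filter fun x => ¬ x ≤ z :=
    Finset.filter_congr (fun x _ => by rw [not_le])
  rw [h2]
  exact Finset.disjoint_filter_filter_not s s _

lemma Esum_split {s : Finset (Fin n)} (hs : s.Nonempty) (w : ℕ → ℂ) :
    ∑ σ ∈ Eset s, w σ.card
      = ∑ z ∈ s.erase (s.min' hs), ∑ σ₁ ∈ Fset (s.filter fun x => x ≤ z),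
          ∑ σ₂ ∈ Eset (s.filter fun x => z < x), w (σ₁.card + σ₂.card) := by
  set a := s.min' hs with ha
  have ham : a ∈ s := s.min'_mem hs
  have hstep : ∀ z ∈ s.erase a, (∑ σ₁ ∈ Fset (s.filter fun x => x ≤ z),
      ∑ σ₂ ∈ Eset (s.filter fun x => z < x), w (σ₁.card + σ₂.card))
      = ∑ p ∈ Fset (s.filter fun x => x ≤ z) ×ˢ Eset (s.filter fun x => z < x),
          w (p.1.card + p.2.card) := by
    intro z _
    rw [Finset.sum_product]
  rw [Finset.sum_congr rfl hstep, ← Finset.sum_sigma (s.erase a)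
    (fun z => Fset (s.filter fun x => x ≤ z) ×ˢ Eset (s.filter fun x => z < x))
    (fun p => w (p.2.1.card + p.2.2.card))]
  refine Finset.sum_bij'
    (fun σ hσ => (⟨((blockOf σ a).max' ⟨a, (blockOf_mem (mem_Eset.mp hσ).1 ham).2⟩),
      (σ.filter (fun B => B ⊆ s.filter (fun x => x ≤ (blockOf σ a).max'
          ⟨a, (blockOf_mem (mem_Eset.mp hσ).1 ham).2⟩)),
       σ.filter (fun B => ¬ B ⊆ s.filter (fun x => x ≤ (blockOf σ a).max'
          ⟨a, (blockOf_mem (mem_Eset.mp hσ).1 ham).2⟩)))⟩ :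
      Σ _ : Fin n, Finset (Finset (Fin n)) × Finset (Finset (Fin n))))
    (fun p _ => p.2.1 ∪ p.2.2) ?_ ?_ ?_ ?_ ?_
  · -- hi
    intro σ hσ
    obtain ⟨hp, hnc, hns⟩ := mem_Eset.mp hσ
    obtain ⟨hW, haW⟩ := blockOf_mem hp ham
    set W := blockOf σ a with hWdef
    have hWne : W.Nonempty := ⟨a, haW⟩
    set z := W.max' hWne with hz
    have hzW : z ∈ W := W.max'_mem hWne
    have hzs : z ∈ s := hp.2.1 W hW hzW
    have hmin : ∀ x ∈ s, a ≤ x := fun x hx => s.min'_le x hx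
    have hzmax : ∀ x ∈ W, x ≤ z := fun x hx => W.le_max' x hx
    have hsep := block_le_sep hp hnc hW haW hzW hmin hzmax
    have hza : z ≠ a := by
      intro h
      apply hns W hW
      have hWa : W = {a} := by
        apply Finset.Subset.antisymm
        · intro y hy
          rw [Finset.mem_singleton]
          exact le_antisymm (h ▸ hzmax y hy) (hmin y (hp.2.1 W hW hy))
        · intro y hy
          rw [Finset.mem_singleton] at hy
          exact hy ▸ haW
      rw [hWa, Finset.card_singleton]
    rw [Finset.mem_sigma]
    constructor
    · exact Finset.mem_erase.mpr ⟨hza, hzs⟩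
    rw [Finset.mem_product]
    constructor
    · -- σ₁ ∈ Fset (s ≤ z)
      rw [mem_Fset]
      have hcov : ∀ x ∈ s.filter (fun y => y ≤ z), ∃! B, B ∈ σ.filter
          (fun B => B ⊆ s.filter (fun y => y ≤ z)) ∧ x ∈ B := by
        intro x hx
        obtain ⟨hxs, hxz⟩ := Finset.mem_filter.mp hx
        obtain ⟨B, ⟨hB, hxB⟩, hun⟩ := hp.2.2 x hxs
        refine ⟨B, ⟨Finset.mem_filter.mpr ⟨hB, hsep B hB x hxB hxz⟩, hxB⟩, ?_⟩
        rintro D ⟨hD, hxD⟩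
        exact hun D ⟨(Finset.mem_filter.mp hD).1, hxD⟩
      refine ⟨⟨fun B hB => hp.1 B (Finset.mem_filter.mp hB).1,
        fun B hB => (Finset.mem_filter.mp hB).2, hcov⟩,
        nc_subset (Finset.filter_subset _ _) hnc,
        fun B hB => hns B (Finset.mem_filter.mp hB).1, ?_⟩
      refine ⟨W, Finset.mem_filter.mpr ⟨hW, hsep W hW z hzW (le_refl z)⟩, a, haW, z, hzW,
        fun x hx => hmin x (Finset.mem_filter.mp hx).1,
        fun x hx => (Finset.mem_filter.mp hx).2⟩
    · -- σ₂ ∈ Eset (s > z)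
      rw [mem_Eset]
      have hblk : ∀ B ∈ σ, ¬ (B ⊆ s.filter (fun y => y ≤ z)) → B ⊆ s.filter (fun y => z < y) := by
        intro B hB hnsub y hyB
        rw [Finset.mem_filter]
        refine ⟨hp.2.1 B hB hyB, ?_⟩
        by_contra hyz
        rw [not_lt] at hyz
        exact hnsub (hsep B hB y hyB hyz)
      have hcov : ∀ x ∈ s.filter (fun y => z < y), ∃! B, B ∈ σ.filter
          (fun B => ¬ B ⊆ s.filter (fun y => y ≤ z)) ∧ x ∈ B := by
        intro x hx
        obtain ⟨hxs, hxz⟩ := Finset.mem_filter.mp hx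
        obtain ⟨B, ⟨hB, hxB⟩, hun⟩ := hp.2.2 x hxs
        have hBn : ¬ B ⊆ s.filter (fun y => y ≤ z) := by
          intro hsub
          have := (Finset.mem_filter.mp (hsub hxB)).2
          exact absurd hxz (not_lt.mpr this)
        refine ⟨B, ⟨Finset.mem_filter.mpr ⟨hB, hBn⟩, hxB⟩, ?_⟩
        rintro D ⟨hD, hxD⟩
        exact hun D ⟨(Finset.mem_filter.mp hD).1, hxD⟩
      exact ⟨⟨fun B hB => hp.1 B (Finset.mem_filter.mp hB).1,
        fun B hB => hblk B (Finset.mem_filter.mp hB).1 (Finset.mem_filter.mp hB).2, hcov⟩,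
        nc_subset (Finset.filter_subset _ _) hnc,
        fun B hB => hns B (Finset.mem_filter.mp hB).1⟩
  · -- hj
    rintro ⟨z, σ₁, σ₂⟩ hp'
    rw [Finset.mem_sigma] at hp'
    obtain ⟨hzm, hpr⟩ := hp'
    rw [Finset.mem_product] at hpr
    obtain ⟨h1, h2⟩ := hpr
    obtain ⟨hp1, hnc1, hns1, _⟩ := mem_Fset.mp h1
    obtain ⟨hp2, hnc2, hns2⟩ := mem_Eset.mp h2
    rw [mem_Eset]
    have hpu := partOn_union (ground_disj s z) hp1 hp2
    rw [ground_split s z] at hpu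
    refine ⟨hpu, ?_, ?_⟩
    · apply nc_union_sep ?_ hp1.2.1 hp2.2.1 hnc1 hnc2
      intro x hx y hy
      exact lt_of_le_of_lt (Finset.mem_filter.mp hx).2 (Finset.mem_filter.mp hy).2
    · intro B hB
      rcases Finset.mem_union.mp hB with h | h
      · exact hns1 B h
      · exact hns2 B h
  · -- left inverse
    intro σ hσ
    simp only
    exact Finset.filter_union_filter_not_eq _ σ
  · -- right inverse
    rintro ⟨z, σ₁, σ₂⟩ hp'
    rw [Finset.mem_sigma] at hp'
    obtain ⟨hzm, hpr⟩ := hp'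
    rw [Finset.mem_product] at hpr
    obtain ⟨h1, h2⟩ := hpr
    obtain ⟨hp1, hnc1, hns1, C, hC, u, huC, v, hvC, humin, hvmax⟩ := mem_Fset.mp h1
    obtain ⟨hp2, hnc2, hns2⟩ := mem_Eset.mp h2
    obtain ⟨hza, hzs⟩ := Finset.mem_erase.mp hzm
    have hpu := partOn_union (ground_disj s z) hp1 hp2
    rw [ground_split s z] at hpu
    have haz : a ∈ s.filter (fun x => x ≤ z) := Finset.mem_filter.mpr ⟨ham, s.min'_le z hzs⟩
    have hzz : z ∈ s.filter (fun x => x ≤ z) := Finset.mem_filter.mpr ⟨hzs, le_refl z⟩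
    have hu : u = a := le_antisymm (humin a haz)
      (s.min'_le u ((Finset.mem_filter.mp (hp1.2.1 C hC huC)).1))
    have hv : v = z := le_antisymm
      ((Finset.mem_filter.mp (hp1.2.1 C hC hvC)).2)
      (hvmax z hzz)
    have haC : a ∈ C := hu ▸ huC
    have hzC : z ∈ C := hv ▸ hvC
    have hCu : C ∈ σ₁ ∪ σ₂ := Finset.mem_union_left _ hC
    have hblock : blockOf (σ₁ ∪ σ₂) a = C := blockOf_eq hpu hCu haC
    have hCsub : C ⊆ s.filter (fun x => x ≤ z) := hp1.2.1 C hC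
    have hmax : ∀ (h : (blockOf (σ₁ ∪ σ₂) a).Nonempty),
        (blockOf (σ₁ ∪ σ₂) a).max' h = z := by
      intro h
      apply le_antisymm
      · apply Finset.max'_le
        intro y hy
        have hyC : y ∈ C := hblock ▸ hy
        exact (Finset.mem_filter.mp (hCsub hyC)).2
      · exact Finset.le_max' _ z (hblock ▸ hzC)
    have hfil1 : (σ₁ ∪ σ₂).filter (fun B => B ⊆ s.filter (fun x => x ≤ z)) = σ₁ := by
      ext B
      rw [Finset.mem_filter, Finset.mem_union]
      constructor
      · rintro ⟨hB | hB, hsub⟩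
        · exact hB
        · obtain ⟨x, hxB⟩ := hp2.1 B hB
          have hx1 := (Finset.mem_filter.mp (hsub hxB)).2
          have hx2 := (Finset.mem_filter.mp (hp2.2.1 B hB hxB)).2
          exact absurd hx1 (not_le.mpr hx2)
      · intro hB
        exact ⟨Or.inl hB, hp1.2.1 B hB⟩
    have hfil2 : (σ₁ ∪ σ₂).filter (fun B => ¬ B ⊆ s.filter (fun x => x ≤ z)) = σ₂ := by
      ext B
      rw [Finset.mem_filter, Finset.mem_union]
      constructor
      · rintro ⟨hB | hB, hsub⟩
        · exact absurd (hp1.2.1 B hB) hsub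
        · exact hB
      · intro hB
        refine ⟨Or.inr hB, ?_⟩
        intro hsub
        obtain ⟨x, hxB⟩ := hp2.1 B hB
        have hx1 := (Finset.mem_filter.mp (hsub hxB)).2
        have hx2 := (Finset.mem_filter.mp (hp2.2.1 B hB hxB)).2
        exact absurd hx1 (not_le.mpr hx2)
    simp only
    generalize_proofs hh
    rw [hmax hh]
    rw [hfil1, hfil2]
  · -- weights
    intro σ hσ
    simp only
    congr 1
    rw [Finset.card_filter_add_card_filter_not]

theorem EFG_val (β γ : ℂ) : ∀ m : ℕ, ∀ s : Finset (Fin n), s.card = m →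
    Efun β γ s = eseq β γ m ∧
    (1 ≤ m → Gfun β γ s = motzkin β γ (m - 1)) ∧
    (2 ≤ m → Ffun β γ s = motzkin β γ (m - 2)) := by
  intro m
  induction m using Nat.strong_induction_on with
  | _ m ih =>
  intro s hcard
  by_cases hm0 : m = 0
  · subst hm0
    have hs : s = ∅ := Finset.card_eq_zero.mp hcard
    subst hs
    refine ⟨?_, by omega, by omega⟩
    rw [Efun, Eset_empty, Finset.sum_singleton]
    simp [eseq]
  by_cases hm1 : m = 1
  · subst hm1
    obtain ⟨x, hx⟩ := Finset.card_eq_one.mp hcard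
    subst hx
    refine ⟨?_, ?_, by omega⟩
    · rw [Efun, Eset_singleton, Finset.sum_empty]
      simp [eseq]
    · intro _
      rw [Gfun, Gset_singleton, Finset.sum_singleton]
      simp [motzkin]
  -- now 2 ≤ m
  have hm2 : 2 ≤ m := by omega
  have hs : s.Nonempty := Finset.card_pos.mp (by omega)
  set a := s.min' hs with ha
  set b := s.max' hs with hb
  have ham : a ∈ s := s.min'_mem hs
  have hbm : b ∈ s := s.max'_mem hs
  have hcard_erase_b : (s.erase b).card = m - 1 := by
    rw [Finset.card_erase_of_mem hbm, hcard]
  have hcard_erase_a : (s.erase a).card = m - 1 := by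
    rw [Finset.card_erase_of_mem ham, hcard]
  -- Step F
  have hF : Ffun β γ s = motzkin β γ (m - 2) := by
    have h0 : Ffun β γ s = ∑ σ ∈ Fset s, (fun k => β ^ (m - 2*k) * γ ^ (k-1)) σ.card := by
      rw [Ffun, hcard]
    rw [h0, Fsum_split hs (by omega) (fun k => β ^ (m - 2*k) * γ ^ (k-1))]
    have h1 : ∀ σ ∈ Gset (s.erase b), (fun k => β ^ (m - 2*k) * γ ^ (k-1)) σ.card
        = β ^ ((s.erase b).card + 1 - 2 * σ.card) * γ ^ (σ.card - 1) := by
      intro σ _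
      simp only
      rw [hcard_erase_b]
      congr 2
      omega
    rw [Finset.sum_congr rfl h1]
    have h2 := ((ih (m-1) (by omega) (s.erase b) hcard_erase_b).2.1 (by omega))
    rw [Gfun] at h2
    have h3 : m - 1 - 1 = m - 2 := by omega
    rw [h3] at h2
    exact h2
  -- facts about j z
  have hjfacts : ∀ z ∈ s.erase a,
      2 ≤ (s.filter fun x => x ≤ z).card ∧ (s.filter fun x => x ≤ z).card ≤ m := by
    intro z hz
    obtain ⟨hza, hzs⟩ := Finset.mem_erase.mp hz
    constructor
    · have hsub : ({a, z} : Finset (Fin n)) ⊆ s.filter fun x => x ≤ z := by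
        intro x hx
        rcases Finset.mem_insert.mp hx with rfl | hx
        · exact Finset.mem_filter.mpr ⟨ham, s.min'_le z hzs⟩
        · rw [Finset.mem_singleton] at hx
          subst hx
          exact Finset.mem_filter.mpr ⟨hzs, le_refl _⟩
      calc 2 = ({a, z} : Finset (Fin n)).card := by
            rw [Finset.card_insert_of_notMem (by simpa using (Ne.symm hza)), Finset.card_singleton]
        _ ≤ _ := Finset.card_le_card hsub
    · rw [← hcard]
      exact Finset.card_le_card (Finset.filter_subset _ _)
  have hcompl : ∀ z : Fin n, (s.filter fun x => z < x).card
      = m - (s.filter fun x => x ≤ z).card := by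
    intro z
    have := filter_le_card_add (s := s) z
    omega
  -- Step H : the convolution sum
  have key : ∀ z ∈ s.erase a,
      Ffun β γ (s.filter fun x => x ≤ z) * Efun β γ (s.filter fun x => z < x)
      = (fun k => motzkin β γ k * eseq β γ (m - 2 - k)) ((s.filter fun x => x ≤ z).card - 2) := by
    intro z hz
    obtain ⟨hj2, hjm⟩ := hjfacts z hz
    have hFz : Ffun β γ (s.filter fun x => x ≤ z)
        = motzkin β γ ((s.filter fun x => x ≤ z).card - 2) := by
      rcases eq_or_lt_of_le hjm with heq | hlt
      · have hfe : s.filter (fun x => x ≤ z) = s := by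
          apply Finset.eq_of_subset_of_card_le (Finset.filter_subset _ _)
          omega
        rw [hfe, hcard]
        exact hF
      · exact (ih _ hlt _ rfl).2.2 hj2
    have hEz : Efun β γ (s.filter fun x => z < x)
        = eseq β γ ((s.filter fun x => z < x).card) :=
      (ih _ (by rw [hcompl z]; omega) _ rfl).1
    rw [hFz, hEz]
    simp only
    congr 2
    rw [hcompl z]
    omega
  have hmono : ∀ z ∈ s.erase a, ∀ z' ∈ s.erase a, z < z' →
      (s.filter fun x => x ≤ z).card < (s.filter fun x => x ≤ z').card := by
    intro z hz z' hz' hlt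
    apply Finset.card_lt_card
    have hsub : s.filter (fun x => x ≤ z) ⊆ s.filter (fun x => x ≤ z') := by
      intro x hx
      rw [Finset.mem_filter] at hx ⊢
      exact ⟨hx.1, le_trans hx.2 hlt.le⟩
    rw [Finset.ssubset_iff_of_subset hsub]
    exact ⟨z', Finset.mem_filter.mpr ⟨(Finset.mem_erase.mp hz').2, le_refl _⟩,
      fun hmem => absurd ((Finset.mem_filter.mp hmem).2) (not_le.mpr hlt)⟩
  have hinj : ∀ z ∈ s.erase a, ∀ z' ∈ s.erase a,
      (s.filter fun x => x ≤ z).card - 2 = (s.filter fun x => x ≤ z').card - 2 → z = z' := by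
    intro z hz z' hz' heq
    obtain ⟨hj2, _⟩ := hjfacts z hz
    obtain ⟨hj2', _⟩ := hjfacts z' hz'
    by_contra hne
    rcases lt_or_gt_of_ne hne with h | h
    · have := hmono z hz z' hz' h; omega
    · have := hmono z' hz' z hz h; omega
  have himg : Finset.image (fun z => (s.filter fun x => x ≤ z).card - 2) (s.erase a)
      = Finset.range (m - 1) := by
    apply Finset.eq_of_subset_of_card_le
    · intro k hk
      obtain ⟨z, hz, rfl⟩ := Finset.mem_image.mp hk
      obtain ⟨hj2, hjm⟩ := hjfacts z hz
      rw [Finset.mem_range]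
      omega
    · rw [Finset.card_image_of_injOn (fun z hz z' hz' h => hinj z hz z' hz' h),
        Finset.card_range, hcard_erase_a]
  have hH : ∑ z ∈ s.erase a,
      Ffun β γ (s.filter fun x => x ≤ z) * Efun β γ (s.filter fun x => z < x)
      = hseq β γ m := by
    rw [Finset.sum_congr rfl key,
      ← Finset.sum_image (f := fun k => motzkin β γ k * eseq β γ (m - 2 - k))
        (g := fun z => (s.filter fun x => x ≤ z).card - 2) hinj, himg]
    rfl
  -- pointwise product evaluation for the inner double sums
  have prodstep : ∀ (c : ℕ), c ≤ 1 → ∀ (z : Fin n), z ∈ s.erase a →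
      (∑ σ₁ ∈ Fset (s.filter fun x => x ≤ z), ∑ σ₂ ∈ Eset (s.filter fun x => z < x),
        β ^ (m + c - 2*(σ₁.card + σ₂.card)) * γ ^ ((σ₁.card + σ₂.card) - c))
      = β ^ c * γ ^ (1 - c) *
        (Ffun β γ (s.filter fun x => x ≤ z) * Efun β γ (s.filter fun x => z < x)) := by
    intro c hc z hz
    obtain ⟨hj2, hjm⟩ := hjfacts z hz
    rw [Ffun, Efun, Finset.sum_mul_sum, Finset.mul_sum]
    apply Finset.sum_congr rfl
    intro σ₁ hσ₁
    rw [Finset.mul_sum]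
    apply Finset.sum_congr rfl
    intro σ₂ hσ₂
    obtain ⟨hp1, _, hns1, _⟩ := mem_Fset.mp hσ₁
    obtain ⟨hp2, _, hns2⟩ := mem_Eset.mp hσ₂
    have hk1 : 2 * σ₁.card ≤ (s.filter fun x => x ≤ z).card := hp1.two_mul_card_le hns1
    have hk2 : 2 * σ₂.card ≤ (s.filter fun x => z < x).card := hp2.two_mul_card_le hns2
    have hk1pos : 1 ≤ σ₁.card := by
      have haf : a ∈ s.filter fun x => x ≤ z := Finset.mem_filter.mpr
        ⟨ham, s.min'_le z (Finset.mem_erase.mp hz).2⟩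
      obtain ⟨B, ⟨hB, _⟩, _⟩ := hp1.2.2 a haf
      exact Finset.card_pos.mpr ⟨B, hB⟩
    have hc2 := hcompl z
    have e1 : m + c - 2*(σ₁.card + σ₂.card)
        = c + (((s.filter fun x => x ≤ z).card - 2*σ₁.card)
          + ((s.filter fun x => z < x).card - 2*σ₂.card)) := by omega
    have e2 : (σ₁.card + σ₂.card) - c = (1 - c) + ((σ₁.card - 1) + σ₂.card) := by omega
    rw [e1, e2, pow_add, pow_add, pow_add, pow_add]
    ring
  -- Step E
  have hE : Efun β γ s = eseq β γ m := by
    have h0 : Efun β γ s = ∑ σ ∈ Eset s, (fun k => β ^ (m + 0 - 2*k) * γ ^ (k - 0)) σ.card := by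
      rw [Efun, hcard]
      apply Finset.sum_congr rfl
      intro σ _
      simp only
      congr 2 <;> omega
    rw [h0, Esum_split hs (fun k => β ^ (m + 0 - 2*k) * γ ^ (k - 0))]
    have h1 : ∀ z ∈ s.erase a, (∑ σ₁ ∈ Fset (s.filter fun x => x ≤ z),
          ∑ σ₂ ∈ Eset (s.filter fun x => z < x),
          (fun k => β ^ (m + 0 - 2*k) * γ ^ (k - 0)) (σ₁.card + σ₂.card))
        = γ * (Ffun β γ (s.filter fun x => x ≤ z) * Efun β γ (s.filter fun x => z < x)) := by
      intro z hz
      have := prodstep 0 (by omega) z hz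
      simpa using this
    rw [Finset.sum_congr rfl h1, ← Finset.mul_sum, hH, ← eseq_eq_hseq β γ m (by omega)]
  -- Step G
  have hG : Gfun β γ s = motzkin β γ (m - 1) := by
    have h0 : Gfun β γ s = ∑ σ ∈ Gset s, (fun k => β ^ (m + 1 - 2*k) * γ ^ (k - 1)) σ.card := by
      rw [Gfun, hcard]
    rw [h0, Gsum_split hs (fun k => β ^ (m + 1 - 2*k) * γ ^ (k - 1))]
    have hterm1 : (∑ σ ∈ Eset (s.erase a), (fun k => β ^ (m + 1 - 2*k) * γ ^ (k - 1)) (σ.card + 1))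
        = eseq β γ (m-1) := by
      have hEa : Efun β γ (s.erase a) = eseq β γ (m-1) :=
        (ih (m-1) (by omega) _ hcard_erase_a).1
      rw [← hEa, Efun]
      apply Finset.sum_congr rfl
      intro σ hσ
      obtain ⟨hp, _, hns⟩ := mem_Eset.mp hσ
      have := hp.two_mul_card_le hns
      rw [hcard_erase_a] at this ⊢
      simp only
      congr 2 <;> omega
    have hterm2 : (∑ σ ∈ Eset s, (fun k => β ^ (m + 1 - 2*k) * γ ^ (k - 1)) σ.card)
        = β * hseq β γ m := by
      rw [Esum_split hs (fun k => β ^ (m + 1 - 2*k) * γ ^ (k - 1))]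
      have h1 : ∀ z ∈ s.erase a, (∑ σ₁ ∈ Fset (s.filter fun x => x ≤ z),
            ∑ σ₂ ∈ Eset (s.filter fun x => z < x),
            (fun k => β ^ (m + 1 - 2*k) * γ ^ (k - 1)) (σ₁.card + σ₂.card))
          = β * (Ffun β γ (s.filter fun x => x ≤ z) * Efun β γ (s.filter fun x => z < x)) := by
        intro z hz
        have := prodstep 1 (by omega) z hz
        simpa using this
      rw [Finset.sum_congr rfl h1, ← Finset.mul_sum, hH]
    rw [hterm1, hterm2]
    have := seqL β γ (m-1)
    have hmm : m - 1 + 1 = m := by omega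
    rwa [hmm] at this
  exact ⟨hE, fun _ => hG, fun _ => hF⟩

def CondI (π S σ : Finset (Finset (Fin n))) : Prop :=
  ∀ U ∈ π, U ∉ S → ∃ C ∈ σ, ∃ m ∈ U, ∃ M ∈ U, m ∈ C ∧ M ∈ C
    ∧ (∀ x ∈ U, m ≤ x) ∧ (∀ x ∈ U, x ≤ M)

def CondII (π S σ : Finset (Finset (Fin n))) : Prop :=
  ∀ B ∈ σ, B.card = 1 → (B ∈ π ∨ ∃ V ∈ S, ∃ x ∈ B, x ∈ V ∧ ∀ y ∈ V, x ≤ y)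

def Vset (s : Finset (Fin n)) (π S : Finset (Finset (Fin n))) :
    Finset (Finset (Finset (Fin n))) :=
  Finset.univ.filter fun σ => PartOn s σ ∧ IsNoncrossing σ ∧ Refines σ π
    ∧ CondI π S σ ∧ CondII π S σ

lemma mem_Vset {s : Finset (Fin n)} {π S σ : Finset (Finset (Fin n))} :
    σ ∈ Vset s π S ↔ PartOn s σ ∧ IsNoncrossing σ ∧ Refines σ π
      ∧ CondI π S σ ∧ CondII π S σ := by simp [Vset]

def CcoefOn (α β t γ : ℂ) (s : Finset (Fin n)) (π S : Finset (Finset (Fin n))) : ℂ :=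
  ∑ σ ∈ Vset s π S,
    α ^ ((π \ S).filter fun U => U.card = 1).card
      * β ^ (s.card + S.card + ((π \ S).filter fun U => U.card = 1).card - 2 * σ.card)
      * t ^ ((π \ S).filter fun U => 2 ≤ U.card).card
      * γ ^ (σ.card - π.card)

def supBlock (π : Finset (Finset (Fin n))) (B : Finset (Fin n)) : Finset (Fin n) :=
  π.sup fun U => if B ⊆ U then U else ∅

lemma supBlock_eq {s : Finset (Fin n)} {π : Finset (Finset (Fin n))} (hπ : PartOn s π)
    {U B : Finset (Fin n)} (hU : U ∈ π) (hBne : B.Nonempty) (hBU : B ⊆ U) :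
    supBlock π B = U := by
  obtain ⟨x, hx⟩ := hBne
  apply le_antisymm
  · apply Finset.sup_le
    intro V hV
    by_cases hBV : B ⊆ V
    · rw [if_pos hBV]
      exact le_of_eq (hπ.block_eq hV hU (hBV hx) (hBU hx))
    · rw [if_neg hBV]
      exact Finset.empty_subset _
  · have := Finset.le_sup (f := fun U => if B ⊆ U then U else ∅) hU
    simpa [hBU, supBlock] using this

/-- the key inequality making the β–exponent additive -/
lemma Vset_card_bound {s : Finset (Fin n)} {π S σ : Finset (Finset (Fin n))}
    (hπ : PartOn s π) (hS : S ⊆ π) (hσ : σ ∈ Vset s π S) :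
    2 * σ.card ≤ s.card + S.card + ((π \ S).filter fun U => U.card = 1).card := by
  obtain ⟨hp, hnc, href, hcI, hcII⟩ := mem_Vset.mp hσ
  set T := σ.filter (fun B => B.card = 1) with hT
  have hsup : ∀ B ∈ σ, supBlock π B ∈ π ∧ B ⊆ supBlock π B := by
    intro B hB
    obtain ⟨C, hC, hBC⟩ := href B hB
    rw [supBlock_eq hπ hC (hp.1 B hB) hBC]
    exact ⟨hC, hBC⟩
  have hmaps : ∀ B ∈ T, supBlock π B ∈ ((π \ S).filter fun U => U.card = 1) ∪ S := by
    intro B hB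
    obtain ⟨hBσ, hB1⟩ := Finset.mem_filter.mp hB
    obtain ⟨hsπ, hsub⟩ := hsup B hBσ
    rcases hcII B hBσ hB1 with hBπ | ⟨V, hVS, x, hxB, hxV, _⟩
    · have hBeq : supBlock π B = B := by
        obtain ⟨y, hy⟩ := hp.1 B hBσ
        exact hπ.block_eq hsπ hBπ (hsub hy) hy
      rw [hBeq]
      by_cases hBS : B ∈ S
      · exact Finset.mem_union_right _ hBS
      · exact Finset.mem_union_left _ (Finset.mem_filter.mpr
          ⟨Finset.mem_sdiff.mpr ⟨hBπ, hBS⟩, hB1⟩)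
    · have hVeq : supBlock π B = V := by
        have hBV : B ⊆ V := by
          obtain ⟨c, hc⟩ := Finset.card_eq_one.mp hB1
          subst hc
          rw [Finset.mem_singleton] at hxB
          subst hxB
          intro y hy
          rw [Finset.mem_singleton] at hy
          exact hy ▸ hxV
        exact supBlock_eq hπ (hS hVS) (hp.1 B hBσ) hBV
      rw [hVeq]
      exact Finset.mem_union_right _ hVS
  have hinj : ∀ B ∈ T, ∀ B' ∈ T, supBlock π B = supBlock π B' → B = B' := by
    intro B hB B' hB'
    intro heq
    obtain ⟨hBσ, hB1⟩ := Finset.mem_filter.mp hB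
    obtain ⟨hB'σ, hB'1⟩ := Finset.mem_filter.mp hB'
    obtain ⟨hsπ, hsub⟩ := hsup B hBσ
    obtain ⟨hs'π, hsub'⟩ := hsup B' hB'σ
    obtain ⟨x, hxB⟩ := Finset.card_eq_one.mp hB1
    obtain ⟨y, hyB⟩ := Finset.card_eq_one.mp hB'1
    subst hxB; subst hyB
    rw [heq] at hsub
    -- both x and y lie in the same block of π
    set W := supBlock π ({y} : Finset (Fin n)) with hW
    have hxW : x ∈ W := hsub (Finset.mem_singleton_self x)
    have hyW : y ∈ W := hsub' (Finset.mem_singleton_self y)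
    have hWπ : W ∈ π := hs'π
    -- use CondII to show x = y
    have hxy : x = y := by
      rcases hcII _ hBσ hB1 with hBπ | ⟨V, hVS, x', hx'B, hx'V, hx'min⟩ <;>
        rcases hcII _ hB'σ hB'1 with hB'π | ⟨V', hV'S, y', hy'B, hy'V, hy'min⟩
      · -- both blocks of π : each equals W
        have h1 : ({x} : Finset (Fin n)) = W := hπ.block_eq hBπ hWπ
          (Finset.mem_singleton_self x) hxW
        have h2 : ({y} : Finset (Fin n)) = W := hπ.block_eq hB'π hWπ
          (Finset.mem_singleton_self y) hyW
        exact Finset.singleton_injective (h1.trans h2.symm)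
      · -- {x} ∈ π hence {x} = W ∋ y
        have h1 : ({x} : Finset (Fin n)) = W := hπ.block_eq hBπ hWπ
          (Finset.mem_singleton_self x) hxW
        exact (Finset.mem_singleton.mp (h1 ▸ hyW)).symm
      · have h2 : ({y} : Finset (Fin n)) = W := hπ.block_eq hB'π hWπ
          (Finset.mem_singleton_self y) hyW
        exact Finset.mem_singleton.mp (h2 ▸ hxW)
      · -- both are minima of blocks of S ; those blocks equal W
        rw [Finset.mem_singleton] at hx'B hy'B
        rw [hx'B] at hx'V hx'min
        rw [hy'B] at hy'V hy'min
        have hVW : V = W := hπ.block_eq (hS hVS) hWπ hx'V hxW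
        have hV'W : V' = W := hπ.block_eq (hS hV'S) hWπ hy'V hyW
        exact le_antisymm (hx'min y (hVW ▸ hyW)) (hy'min x (hV'W ▸ hxW))
    rw [hxy]
  have hTcard : T.card ≤ ((π \ S).filter fun U => U.card = 1).card + S.card := by
    calc T.card ≤ (((π \ S).filter fun U => U.card = 1) ∪ S).card :=
          Finset.card_le_card_of_injOn (fun B => supBlock π B) hmaps
            (fun B hB B' hB' h => hinj B hB B' hB' h)
      _ ≤ _ := Finset.card_union_le _ _
  have hsum : 2 * σ.card ≤ s.card + T.card := by
    have h1 : ∀ B ∈ σ, 2 ≤ B.card + (if B.card = 1 then 1 else 0) := by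
      intro B hB
      have := Finset.card_pos.mpr (hp.1 B hB)
      by_cases h : B.card = 1 <;> simp [h] <;> omega
    calc 2 * σ.card = ∑ _B ∈ σ, 2 := by rw [Finset.sum_const, smul_eq_mul, mul_comm]
      _ ≤ ∑ B ∈ σ, (B.card + if B.card = 1 then 1 else 0) := Finset.sum_le_sum h1
      _ = (∑ B ∈ σ, B.card) + ∑ B ∈ σ, (if B.card = 1 then 1 else 0) :=
          Finset.sum_add_distrib
      _ = s.card + T.card := by
          rw [hp.sum_card, hT, Finset.card_filter]
  omega

lemma Vset_card_ge {s : Finset (Fin n)} {π S σ : Finset (Finset (Fin n))}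
    (hπ : PartOn s π) (hσ : σ ∈ Vset s π S) : π.card ≤ σ.card := by
  obtain ⟨hp, _, href, _, _⟩ := mem_Vset.mp hσ
  exact hp.card_le hπ href

lemma CcoefOn_empty (α β t γ : ℂ) : CcoefOn α β t γ (∅ : Finset (Fin n)) ∅ ∅ = 1 := by
  have hV : Vset (∅ : Finset (Fin n)) ∅ ∅ = {∅} := by
    ext σ
    rw [mem_Vset, Finset.mem_singleton]
    constructor
    · rintro ⟨hp, _⟩
      exact partOn_empty_iff.mp hp
    · rintro rfl
      exact ⟨partOn_empty_iff.mpr rfl, nc_empty,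
        fun B hB => absurd hB (Finset.notMem_empty _),
        fun U hU => absurd hU (Finset.notMem_empty _),
        fun B hB => absurd hB (Finset.notMem_empty _)⟩
  rw [CcoefOn, hV, Finset.sum_singleton]
  simp

lemma CcoefOn_single_one (α β t γ : ℂ) {U : Finset (Fin n)} (hU1 : U.card = 1) :
    CcoefOn α β t γ U {U} ∅ = α := by
  obtain ⟨x, hx⟩ := Finset.card_eq_one.mp hU1
  subst hx
  have hV : Vset ({x} : Finset (Fin n)) {({x} : Finset (Fin n))} ∅ = {{{x}}} := by
    ext σ
    rw [mem_Vset, Finset.mem_singleton]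
    constructor
    · rintro ⟨hp, _⟩
      exact partOn_singleton_iff.mp hp
    · rintro rfl
      refine ⟨partOn_singleton_iff.mpr rfl, nc_single _, ?_, ?_, ?_⟩
      · intro B hB
        rw [Finset.mem_singleton] at hB
        exact ⟨{x}, Finset.mem_singleton_self _, hB ▸ Finset.Subset.refl _⟩
      · intro V hV _
        rw [Finset.mem_singleton] at hV
        subst hV
        exact ⟨{x}, Finset.mem_singleton_self _, x, Finset.mem_singleton_self _,
          x, Finset.mem_singleton_self _, Finset.mem_singleton_self _,
          Finset.mem_singleton_self _,
          fun y hy => le_of_eq (Finset.mem_singleton.mp hy).symm,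
          fun y hy => le_of_eq (Finset.mem_singleton.mp hy)⟩
      · intro B hB _
        rw [Finset.mem_singleton] at hB
        exact Or.inl (hB ▸ Finset.mem_singleton_self _)
  rw [CcoefOn, hV, Finset.sum_singleton]
  have h1 : (({({x} : Finset (Fin n))} : Finset (Finset (Fin n))) \ ∅) = {{x}} := by simp
  rw [h1]
  have h2 : (({({x} : Finset (Fin n))} : Finset (Finset (Fin n))).filter
      fun U => U.card = 1) = {{x}} := by
    apply Finset.filter_true_of_mem
    intro B hB
    rw [Finset.mem_singleton] at hB
    rw [hB, Finset.card_singleton]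
  have h3 : (({({x} : Finset (Fin n))} : Finset (Finset (Fin n))).filter
      fun U => 2 ≤ U.card) = ∅ := by
    apply Finset.filter_false_of_mem
    intro B hB
    rw [Finset.mem_singleton] at hB
    rw [hB, Finset.card_singleton]
    omega
  rw [h2, h3]
  simp

lemma CcoefOn_single_big (α β t γ : ℂ) {U : Finset (Fin n)} (hU2 : 2 ≤ U.card) :
    CcoefOn α β t γ U {U} ∅ = t * Ffun β γ U := by
  have hV : Vset U {U} ∅ = Fset U := by
    ext σ
    rw [mem_Vset, mem_Fset]
    constructor
    · rintro ⟨hp, hnc, href, hcI, hcII⟩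
      refine ⟨hp, hnc, ?_, ?_⟩
      · intro B hB hB1
        rcases hcII B hB hB1 with hBπ | ⟨V, hV, _⟩
        · rw [Finset.mem_singleton] at hBπ
          rw [hBπ] at hB1
          omega
        · exact absurd hV (Finset.notMem_empty _)
      · obtain ⟨C, hC, m, hmU, M, hMU, hmC, hMC, hmin, hmax⟩ :=
          hcI U (Finset.mem_singleton_self _) (Finset.notMem_empty _)
        exact ⟨C, hC, m, hmC, M, hMC, hmin, hmax⟩
    · rintro ⟨hp, hnc, hns, C, hC, u, huC, v, hvC, hmin, hmax⟩
      refine ⟨hp, hnc, ?_, ?_, ?_⟩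
      · intro B hB
        exact ⟨U, Finset.mem_singleton_self _, hp.2.1 B hB⟩
      · intro U' hU' _
        rw [Finset.mem_singleton] at hU'
        subst hU'
        exact ⟨C, hC, u, hp.2.1 C hC huC, v, hp.2.1 C hC hvC, huC, hvC, hmin, hmax⟩
      · intro B hB hB1
        exact absurd hB1 (hns B hB)
  rw [CcoefOn, hV, Ffun, Finset.mul_sum]
  apply Finset.sum_congr rfl
  intro σ _
  have h1 : (({U} : Finset (Finset (Fin n))) \ ∅) = {U} := by simp
  rw [h1]
  have h2 : (({U} : Finset (Finset (Fin n))).filter fun V => V.card = 1) = ∅ := by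
    apply Finset.filter_false_of_mem
    intro B hB
    rw [Finset.mem_singleton] at hB
    rw [hB]
    omega
  have h3 : (({U} : Finset (Finset (Fin n))).filter fun V => 2 ≤ V.card) = {U} := by
    apply Finset.filter_true_of_mem
    intro B hB
    rw [Finset.mem_singleton] at hB
    rw [hB]
    exact hU2
  rw [h2, h3]
  simp only [Finset.card_empty, Finset.card_singleton, pow_zero, pow_one, one_mul,
    Finset.card_singleton]
  ring_nf

lemma CcoefOn_single_open (α β t γ : ℂ) {U : Finset (Fin n)} (hUne : U.Nonempty) :
    CcoefOn α β t γ U {U} {U} = Gfun β γ U := by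
  have hV : Vset U {U} {U} = Gset U := by
    ext σ
    rw [mem_Vset, mem_Gset]
    constructor
    · rintro ⟨hp, hnc, href, hcI, hcII⟩
      refine ⟨hp, hnc, ?_⟩
      intro B hB hB1
      rcases hcII B hB hB1 with hBπ | ⟨V, hVS, x, hxB, hxV, hxmin⟩
      · rw [Finset.mem_singleton] at hBπ
        subst hBπ
        obtain ⟨c, hc⟩ := Finset.card_eq_one.mp hB1
        refine ⟨c, hc ▸ Finset.mem_singleton_self c, ?_⟩
        intro y hy
        rw [hc, Finset.mem_singleton] at hy
        exact le_of_eq hy.symm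
      · rw [Finset.mem_singleton] at hVS
        subst hVS
        exact ⟨x, hxB, hxmin⟩
    · rintro ⟨hp, hnc, hg⟩
      refine ⟨hp, hnc, ?_, ?_, ?_⟩
      · intro B hB
        exact ⟨U, Finset.mem_singleton_self _, hp.2.1 B hB⟩
      · intro U' hU' hU'S
        rw [Finset.mem_singleton] at hU'
        exact absurd (hU' ▸ Finset.mem_singleton_self U) hU'S
      · intro B hB hB1
        obtain ⟨x, hxB, hxmin⟩ := hg B hB hB1
        exact Or.inr ⟨U, Finset.mem_singleton_self _, x, hxB, hp.2.1 B hB hxB, hxmin⟩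
  rw [CcoefOn, hV, Gfun]
  apply Finset.sum_congr rfl
  intro σ _
  have h1 : (({U} : Finset (Finset (Fin n))) \ {U}) = ∅ := by simp
  rw [h1]
  simp only [Finset.filter_empty, Finset.card_empty, Finset.card_singleton, pow_zero,
    one_mul, mul_one]

lemma Vsum_split {s U : Finset (Fin n)} {π S : Finset (Finset (Fin n))}
    (hπ : PartOn s π) (hncπ : IsNoncrossing π) (hS : S ⊆ π) (hU : U ∈ π) (w : ℕ → ℂ) :
    ∑ σ ∈ Vset s π S, w σ.card
      = ∑ σ₁ ∈ Vset U {U} (S ∩ {U}), ∑ σ₂ ∈ Vset (s \ U) (π.erase U) (S.erase U),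
          w (σ₁.card + σ₂.card) := by
  have hUs : U ⊆ s := hπ.2.1 U hU
  have hUdisj : Disjoint U (s \ U) := by
    rw [Finset.disjoint_left]
    intro x hxU hxs
    exact (Finset.mem_sdiff.mp hxs).2 hxU
  have hground : U ∪ (s \ U) = s := Finset.union_sdiff_of_subset hUs
  rw [← Finset.sum_product']
  refine Finset.sum_bij' (fun σ _ => (σ.filter (fun B => B ⊆ U), σ.filter (fun B => ¬ B ⊆ U)))
    (fun p _ => p.1 ∪ p.2) ?_ ?_ ?_ ?_ ?_
  · -- forward map lands in the product
    intro σ hσ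
    obtain ⟨hp, hnc, href, hcI, hcII⟩ := mem_Vset.mp hσ
    have key : ∀ B ∈ σ, ¬ B ⊆ U → B ⊆ s \ U := by
      intro B hB hBU
      obtain ⟨C, hC, hBC⟩ := href B hB
      have hCU : C ≠ U := fun h => hBU (h ▸ hBC)
      intro x hx
      rw [Finset.mem_sdiff]
      exact ⟨hp.2.1 B hB hx, fun hxU => hCU (hπ.block_eq hC hU (hBC hx) hxU)⟩
    rw [Finset.mem_product]
    constructor
    · rw [mem_Vset]
      refine ⟨⟨fun B hB => hp.1 B (Finset.mem_filter.mp hB).1,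
        fun B hB => (Finset.mem_filter.mp hB).2, ?_⟩,
        nc_subset (Finset.filter_subset _ _) hnc, ?_, ?_, ?_⟩
      · intro x hx
        obtain ⟨B, ⟨hB, hxB⟩, hun⟩ := hp.2.2 x (hUs hx)
        have hBU : B ⊆ U := by
          by_contra hc
          exact (Finset.mem_sdiff.mp (key B hB hc hxB)).2 hx
        exact ⟨B, ⟨Finset.mem_filter.mpr ⟨hB, hBU⟩, hxB⟩,
          fun D hD => hun D ⟨(Finset.mem_filter.mp hD.1).1, hD.2⟩⟩
      · intro B hB
        exact ⟨U, Finset.mem_singleton_self _, (Finset.mem_filter.mp hB).2⟩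
      · intro U' hU' hU'S
        rw [Finset.mem_singleton] at hU'
        subst hU'
        have hUS : U' ∉ S := fun h => hU'S (Finset.mem_inter.mpr ⟨h, Finset.mem_singleton_self _⟩)
        obtain ⟨C, hC, m, hmU, M, hMU, hmC, hMC, hmin, hmax⟩ := hcI U' hU hUS
        have hCU : C ⊆ U' := by
          by_contra hc
          exact (Finset.mem_sdiff.mp (key C hC hc hmC)).2 hmU
        exact ⟨C, Finset.mem_filter.mpr ⟨hC, hCU⟩, m, hmU, M, hMU, hmC, hMC, hmin, hmax⟩
      · intro B hB hB1
        obtain ⟨hBσ, hBU⟩ := Finset.mem_filter.mp hB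
        rcases hcII B hBσ hB1 with hBπ | ⟨V, hVS, x, hxB, hxV, hxmin⟩
        · left
          rw [Finset.mem_singleton]
          obtain ⟨y, hy⟩ := hp.1 B hBσ
          exact hπ.block_eq hBπ hU hy (hBU hy)
        · right
          have hVU : V = U := hπ.block_eq (hS hVS) hU hxV (hBU hxB)
          exact ⟨V, Finset.mem_inter.mpr ⟨hVS, Finset.mem_singleton.mpr hVU⟩, x, hxB, hxV, hxmin⟩
    · rw [mem_Vset]
      refine ⟨⟨fun B hB => hp.1 B (Finset.mem_filter.mp hB).1,
        fun B hB => key B (Finset.mem_filter.mp hB).1 (Finset.mem_filter.mp hB).2, ?_⟩,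
        nc_subset (Finset.filter_subset _ _) hnc, ?_, ?_, ?_⟩
      · intro x hx
        obtain ⟨hxs, hxU⟩ := Finset.mem_sdiff.mp hx
        obtain ⟨B, ⟨hB, hxB⟩, hun⟩ := hp.2.2 x hxs
        have hBU : ¬ B ⊆ U := fun h => hxU (h hxB)
        exact ⟨B, ⟨Finset.mem_filter.mpr ⟨hB, hBU⟩, hxB⟩,
          fun D hD => hun D ⟨(Finset.mem_filter.mp hD.1).1, hD.2⟩⟩
      · intro B hB
        obtain ⟨hBσ, hBU⟩ := Finset.mem_filter.mp hB
        obtain ⟨C, hC, hBC⟩ := href B hBσ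
        have hCU : C ≠ U := fun h => hBU (h ▸ hBC)
        exact ⟨C, Finset.mem_erase.mpr ⟨hCU, hC⟩, hBC⟩
      · intro U' hU' hU'S
        obtain ⟨hU'ne, hU'π⟩ := Finset.mem_erase.mp hU'
        have hU'Sfull : U' ∉ S := fun h => hU'S (Finset.mem_erase.mpr ⟨hU'ne, h⟩)
        obtain ⟨C, hC, m, hmU, M, hMU, hmC, hMC, hmin, hmax⟩ := hcI U' hU'π hU'Sfull
        have hCU : ¬ C ⊆ U := fun hc => hU'ne (hπ.block_eq hU'π hU hmU (hc hmC))
        exact ⟨C, Finset.mem_filter.mpr ⟨hC, hCU⟩, m, hmU, M, hMU, hmC, hMC, hmin, hmax⟩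
      · intro B hB hB1
        obtain ⟨hBσ, hBU⟩ := Finset.mem_filter.mp hB
        have hBs : B ⊆ s \ U := key B hBσ hBU
        rcases hcII B hBσ hB1 with hBπ | ⟨V, hVS, x, hxB, hxV, hxmin⟩
        · left
          refine Finset.mem_erase.mpr ⟨?_, hBπ⟩
          intro h
          exact hBU (h ▸ Finset.Subset.refl B)
        · right
          have hVU : V ≠ U := fun h => (Finset.mem_sdiff.mp (hBs hxB)).2 (h ▸ hxV)
          exact ⟨V, Finset.mem_erase.mpr ⟨hVU, hVS⟩, x, hxB, hxV, hxmin⟩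
  · -- backward map lands in Vset s π S
    rintro ⟨σ₁, σ₂⟩ hpr
    rw [Finset.mem_product] at hpr
    obtain ⟨h1, h2⟩ := hpr
    obtain ⟨hp1, hnc1, href1, hcI1, hcII1⟩ := mem_Vset.mp h1
    obtain ⟨hp2, hnc2, href2, hcI2, hcII2⟩ := mem_Vset.mp h2
    rw [mem_Vset]
    have hpu := partOn_union hUdisj hp1 hp2
    rw [hground] at hpu
    have hsub1 : ∀ B ∈ σ₁, B ⊆ U := by
      intro B hB
      obtain ⟨C, hC, hsub⟩ := href1 B hB
      rw [Finset.mem_singleton] at hC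
      exact hC ▸ hsub
    refine ⟨hpu, ?_, ?_, ?_, ?_⟩
    · rintro ⟨A, hA, B, hB, hne, i, hi, k, hk, j, hj, l, hl, hh1, hh2, hh3⟩
      rcases Finset.mem_union.mp hA with hA1 | hA2 <;> rcases Finset.mem_union.mp hB with hB1 | hB2
      · exact hnc1 ⟨A, hA1, B, hB1, hne, i, hi, k, hk, j, hj, l, hl, hh1, hh2, hh3⟩
      · obtain ⟨C, hC, hBC⟩ := href2 B hB2
        obtain ⟨hCne, hCπ⟩ := Finset.mem_erase.mp hC
        exact hncπ ⟨U, hU, C, hCπ, Ne.symm hCne, i, hsub1 A hA1 hi, k, hsub1 A hA1 hk,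
          j, hBC hj, l, hBC hl, hh1, hh2, hh3⟩
      · obtain ⟨C, hC, hAC⟩ := href2 A hA2
        obtain ⟨hCne, hCπ⟩ := Finset.mem_erase.mp hC
        exact hncπ ⟨C, hCπ, U, hU, hCne, i, hAC hi, k, hAC hk,
          j, hsub1 B hB1 hj, l, hsub1 B hB1 hl, hh1, hh2, hh3⟩
      · exact hnc2 ⟨A, hA2, B, hB2, hne, i, hi, k, hk, j, hj, l, hl, hh1, hh2, hh3⟩
    · intro B hB
      rcases Finset.mem_union.mp hB with h | h
      · exact ⟨U, hU, hsub1 B h⟩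
      · obtain ⟨C, hC, hsub⟩ := href2 B h
        exact ⟨C, Finset.mem_of_mem_erase hC, hsub⟩
    · intro U' hU' hU'S
      by_cases hEq : U' = U
      · subst hEq
        have hns : U' ∉ S ∩ {U'} := fun h => hU'S (Finset.mem_inter.mp h).1
        obtain ⟨C, hC, rest⟩ := hcI1 U' (Finset.mem_singleton_self _) hns
        exact ⟨C, Finset.mem_union_left _ hC, rest⟩
      · have hh1' : U' ∈ π.erase U := Finset.mem_erase.mpr ⟨hEq, hU'⟩
        have hh2' : U' ∉ S.erase U := fun h => hU'S (Finset.mem_of_mem_erase h)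
        obtain ⟨C, hC, rest⟩ := hcI2 U' hh1' hh2'
        exact ⟨C, Finset.mem_union_right _ hC, rest⟩
    · intro B hB hB1
      rcases Finset.mem_union.mp hB with h | h
      · rcases hcII1 B h hB1 with hBπ | ⟨V, hVS, rest⟩
        · rw [Finset.mem_singleton] at hBπ
          exact Or.inl (hBπ ▸ hU)
        · exact Or.inr ⟨V, (Finset.mem_inter.mp hVS).1, rest⟩
      · rcases hcII2 B h hB1 with hBπ | ⟨V, hVS, rest⟩
        · exact Or.inl (Finset.mem_of_mem_erase hBπ)
        · exact Or.inr ⟨V, Finset.mem_of_mem_erase hVS, rest⟩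
  · -- left inverse
    intro σ hσ
    simp only
    exact Finset.filter_union_filter_not_eq _ σ
  · -- right inverse
    rintro ⟨σ₁, σ₂⟩ hpr
    rw [Finset.mem_product] at hpr
    obtain ⟨h1, h2⟩ := hpr
    obtain ⟨hp1, _, href1, _, _⟩ := mem_Vset.mp h1
    obtain ⟨hp2, _, _, _, _⟩ := mem_Vset.mp h2
    have hsub1 : ∀ B ∈ σ₁, B ⊆ U := by
      intro B hB
      obtain ⟨C, hC, hsub⟩ := href1 B hB
      rw [Finset.mem_singleton] at hC
      exact hC ▸ hsub
    have hf1 : (σ₁ ∪ σ₂).filter (fun B => B ⊆ U) = σ₁ := by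
      ext B
      rw [Finset.mem_filter, Finset.mem_union]
      constructor
      · rintro ⟨hB1 | hB2, hsub⟩
        · exact hB1
        · obtain ⟨x, hx⟩ := hp2.1 B hB2
          exact absurd (hsub hx) ((Finset.mem_sdiff.mp (hp2.2.1 B hB2 hx)).2)
      · intro hB
        exact ⟨Or.inl hB, hsub1 B hB⟩
    have hf2 : (σ₁ ∪ σ₂).filter (fun B => ¬ B ⊆ U) = σ₂ := by
      ext B
      rw [Finset.mem_filter, Finset.mem_union]
      constructor
      · rintro ⟨hB1 | hB2, hsub⟩
        · exact absurd (hsub1 B hB1) hsub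
        · exact hB2
      · intro hB
        refine ⟨Or.inr hB, ?_⟩
        intro hsub
        obtain ⟨x, hx⟩ := hp2.1 B hB
        exact absurd (hsub hx) ((Finset.mem_sdiff.mp (hp2.2.1 B hB hx)).2)
    simp only
    rw [hf1, hf2]
  · -- weights
    intro σ hσ
    simp only
    congr 1
    rw [Finset.card_filter_add_card_filter_not]

theorem CcoefOn_eq (α β t γ : ℂ) : ∀ N : ℕ, ∀ s : Finset (Fin n),
    ∀ π S : Finset (Finset (Fin n)), π.card = N → PartOn s π → IsNoncrossing π → S ⊆ π →
    CcoefOn α β t γ s π S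
      = (∏ U ∈ π \ S, kappa α β t γ U.card) * ∏ V ∈ S, motzkin β γ (V.card - 1) := by
  intro N
  induction N using Nat.strong_induction_on with
  | _ N ih =>
  intro s π S hN hπ hnc hS
  by_cases hN0 : N = 0
  · subst hN0
    have hπe : π = ∅ := Finset.card_eq_zero.mp hN
    subst hπe
    have hSe : S = ∅ := Finset.subset_empty.mp hS
    subst hSe
    have hse : s = ∅ := by
      rw [Finset.eq_empty_iff_forall_notMem]
      intro x hx
      obtain ⟨B, ⟨hB, _⟩, _⟩ := hπ.2.2 x hx
      exact absurd hB (Finset.notMem_empty _)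
    subst hse
    rw [CcoefOn_empty]
    simp
  obtain ⟨U, hU⟩ := Finset.card_pos.mp (show 0 < π.card by omega)
  have hUne : U.Nonempty := hπ.1 U hU
  have hUs : U ⊆ s := hπ.2.1 U hU
  have hπe_part : PartOn (s \ U) (π.erase U) := by
    refine ⟨fun B hB => hπ.1 B (Finset.mem_of_mem_erase hB), ?_, ?_⟩
    · intro B hB x hx
      obtain ⟨hBne, hBπ⟩ := Finset.mem_erase.mp hB
      rw [Finset.mem_sdiff]
      exact ⟨hπ.2.1 B hBπ hx, fun hxU => hBne (hπ.block_eq hBπ hU hx hxU)⟩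
    · intro x hx
      obtain ⟨hxs, hxU⟩ := Finset.mem_sdiff.mp hx
      obtain ⟨B, ⟨hB, hxB⟩, hun⟩ := hπ.2.2 x hxs
      have hBU : B ≠ U := fun h => hxU (h ▸ hxB)
      exact ⟨B, ⟨Finset.mem_erase.mpr ⟨hBU, hB⟩, hxB⟩,
        fun D hD => hun D ⟨Finset.mem_of_mem_erase hD.1, hD.2⟩⟩
  have hπe_nc : IsNoncrossing (π.erase U) := nc_subset (Finset.erase_subset _ _) hnc
  have hSe_sub : S.erase U ⊆ π.erase U := fun B hB =>
    Finset.mem_erase.mpr ⟨(Finset.mem_erase.mp hB).1, hS (Finset.mem_of_mem_erase hB)⟩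
  have hUpart : PartOn U {U} := by
    refine ⟨?_, ?_, ?_⟩
    · intro B hB
      rw [Finset.mem_singleton] at hB
      exact hB ▸ hUne
    · intro B hB
      rw [Finset.mem_singleton] at hB
      exact hB ▸ Finset.Subset.refl U
    · intro x hx
      exact ⟨U, ⟨Finset.mem_singleton_self _, hx⟩, fun D hD => Finset.mem_singleton.mp hD.1⟩
  have hS1_sub : S ∩ {U} ⊆ {U} := Finset.inter_subset_right
  have hd : Disjoint ({U} \ (S ∩ {U})) (π.erase U \ S.erase U) := by
    rw [Finset.disjoint_left]
    intro B hB1 hB2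
    rw [Finset.mem_sdiff, Finset.mem_singleton] at hB1
    exact (Finset.mem_erase.mp (Finset.mem_sdiff.mp hB2).1).1 hB1.1
  have hu : ({U} \ (S ∩ {U})) ∪ (π.erase U \ S.erase U) = π \ S := by
    ext B
    simp only [Finset.mem_union, Finset.mem_sdiff, Finset.mem_singleton, Finset.mem_inter,
      Finset.mem_erase]
    constructor
    · rintro (⟨rfl, h⟩ | ⟨⟨hne, hπB⟩, h2⟩)
      · exact ⟨hU, fun hs' => h ⟨hs', rfl⟩⟩
      · exact ⟨hπB, fun hs' => h2 ⟨hne, hs'⟩⟩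
    · rintro ⟨hπB, hBS⟩
      by_cases hEq : B = U
      · exact Or.inl ⟨hEq, fun h => hBS h.1⟩
      · exact Or.inr ⟨⟨hEq, hπB⟩, fun h => hBS h.2⟩
  have hcnt : ∀ (p : Finset (Fin n) → Prop) (inst : DecidablePred p),
      (@Finset.filter _ p inst (π \ S)).card
        = (@Finset.filter _ p inst ({U} \ (S ∩ {U}))).card
          + (@Finset.filter _ p inst (π.erase U \ S.erase U)).card := by
    intro p inst
    rw [← hu, Finset.filter_union,
      Finset.card_union_of_disjoint (Finset.disjoint_filter_filter hd)]
  have hs_card : U.card + (s \ U).card = s.card := by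
    have := Finset.card_sdiff_add_card_eq_card hUs
    omega
  have hS_card : S.card = (S ∩ {U}).card + (S.erase U).card := by
    by_cases hUS : U ∈ S
    · rw [Finset.inter_singleton_of_mem hUS, Finset.card_erase_of_mem hUS,
        Finset.card_singleton]
      have : 0 < S.card := Finset.card_pos.mpr ⟨U, hUS⟩
      omega
    · rw [Finset.inter_singleton_of_notMem hUS, Finset.erase_eq_of_notMem hUS]
      simp
  have hπ_card : π.card = 1 + (π.erase U).card := by
    have := Finset.card_erase_add_one hU
    omega
  -- the splitting of the coefficient
  have hmain : CcoefOn α β t γ s π S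
      = CcoefOn α β t γ U {U} (S ∩ {U})
        * CcoefOn α β t γ (s \ U) (π.erase U) (S.erase U) := by
    have hws := Vsum_split hπ hnc hS hU (fun k =>
      α ^ ((π \ S).filter fun V => V.card = 1).card
        * β ^ (s.card + S.card + ((π \ S).filter fun V => V.card = 1).card - 2 * k)
        * t ^ ((π \ S).filter fun V => 2 ≤ V.card).card
        * γ ^ (k - π.card))
    have hstart : CcoefOn α β t γ s π S = ∑ σ ∈ Vset s π S, (fun k =>
      α ^ ((π \ S).filter fun V => V.card = 1).card
        * β ^ (s.card + S.card + ((π \ S).filter fun V => V.card = 1).card - 2 * k)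
        * t ^ ((π \ S).filter fun V => 2 ≤ V.card).card
        * γ ^ (k - π.card)) σ.card := rfl
    rw [hstart, hws]
    have hpoint : ∀ σ₁ ∈ Vset U {U} (S ∩ {U}),
        (∑ σ₂ ∈ Vset (s \ U) (π.erase U) (S.erase U), (fun k =>
          α ^ ((π \ S).filter fun V => V.card = 1).card
            * β ^ (s.card + S.card + ((π \ S).filter fun V => V.card = 1).card - 2 * k)
            * t ^ ((π \ S).filter fun V => 2 ≤ V.card).card
            * γ ^ (k - π.card)) (σ₁.card + σ₂.card))
        = ∑ σ₂ ∈ Vset (s \ U) (π.erase U) (S.erase U),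
            (α ^ (({U} \ (S ∩ {U})).filter fun V => V.card = 1).card
              * β ^ (U.card + (S ∩ {U}).card
                  + (({U} \ (S ∩ {U})).filter fun V => V.card = 1).card - 2 * σ₁.card)
              * t ^ (({U} \ (S ∩ {U})).filter fun V => 2 ≤ V.card).card
              * γ ^ (σ₁.card - ({U} : Finset (Finset (Fin n))).card))
            * (α ^ ((π.erase U \ S.erase U).filter fun V => V.card = 1).card
              * β ^ ((s \ U).card + (S.erase U).card
                  + ((π.erase U \ S.erase U).filter fun V => V.card = 1).card - 2 * σ₂.card)
              * t ^ ((π.erase U \ S.erase U).filter fun V => 2 ≤ V.card).card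
              * γ ^ (σ₂.card - (π.erase U).card)) := by
      intro σ₁ hσ₁
      apply Finset.sum_congr rfl
      intro σ₂ hσ₂
      have hb1 : 2 * σ₁.card ≤ U.card + (S ∩ {U}).card
          + (({U} \ (S ∩ {U})).filter fun V => V.card = 1).card :=
        Vset_card_bound hUpart hS1_sub hσ₁
      have hb2 : 2 * σ₂.card ≤ (s \ U).card + (S.erase U).card
          + ((π.erase U \ S.erase U).filter fun V => V.card = 1).card :=
        Vset_card_bound hπe_part hSe_sub hσ₂
      have hg1 : ({U} : Finset (Finset (Fin n))).card ≤ σ₁.card := Vset_card_ge hUpart hσ₁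
      have hg2 : (π.erase U).card ≤ σ₂.card := Vset_card_ge hπe_part hσ₂
      have hcardU : ({U} : Finset (Finset (Fin n))).card = 1 := Finset.card_singleton U
      simp only
      have e1 : ((π \ S).filter fun V => V.card = 1).card
          = (({U} \ (S ∩ {U})).filter fun V => V.card = 1).card
            + ((π.erase U \ S.erase U).filter fun V => V.card = 1).card := hcnt _ _
      have e2 : ((π \ S).filter fun V => 2 ≤ V.card).card
          = (({U} \ (S ∩ {U})).filter fun V => 2 ≤ V.card).card
            + ((π.erase U \ S.erase U).filter fun V => 2 ≤ V.card).card := hcnt _ _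
      have e3 : s.card + S.card + ((π \ S).filter fun V => V.card = 1).card
            - 2 * (σ₁.card + σ₂.card)
          = (U.card + (S ∩ {U}).card
              + (({U} \ (S ∩ {U})).filter fun V => V.card = 1).card - 2 * σ₁.card)
            + ((s \ U).card + (S.erase U).card
              + ((π.erase U \ S.erase U).filter fun V => V.card = 1).card - 2 * σ₂.card) := by
        have hc1 : ((π \ S).filter fun V => V.card = 1).card
            = (({U} \ (S ∩ {U})).filter fun V => V.card = 1).card
              + ((π.erase U \ S.erase U).filter fun V => V.card = 1).card := hcnt _ _
        omega
      have e4 : σ₁.card + σ₂.card - π.card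
          = (σ₁.card - ({U} : Finset (Finset (Fin n))).card)
            + (σ₂.card - (π.erase U).card) := by
        omega
      rw [e3, e4, e1, e2, pow_add, pow_add, pow_add, pow_add]
      ring
    rw [Finset.sum_congr rfl hpoint, ← Finset.sum_mul_sum]
    rfl
  rw [hmain, ih (N - 1) (by omega) (s \ U) (π.erase U) (S.erase U)
    (by rw [Finset.card_erase_of_mem hU, hN]) hπe_part hπe_nc hSe_sub]
  by_cases hUS : U ∈ S
  · have hS1 : S ∩ {U} = {U} := Finset.inter_singleton_of_mem hUS
    have hπSe : π \ S = π.erase U \ S.erase U := by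
      rw [← hu, hS1]
      simp
    have hSins : insert U (S.erase U) = S := Finset.insert_erase hUS
    have hGv : CcoefOn α β t γ U {U} (S ∩ {U}) = motzkin β γ (U.card - 1) := by
      rw [hS1, CcoefOn_single_open α β t γ hUne]
      exact (EFG_val β γ U.card U rfl).2.1 (Finset.card_pos.mpr hUne)
    rw [hGv, hπSe]
    have hprodS : ∏ V ∈ S, motzkin β γ (V.card - 1)
        = motzkin β γ (U.card - 1) * ∏ V ∈ S.erase U, motzkin β γ (V.card - 1) := by
      rw [← hSins, Finset.prod_insert (Finset.notMem_erase _ _)]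
      rw [hSins]
    rw [hprodS]
    ring
  · have hS1 : S ∩ {U} = ∅ := Finset.inter_singleton_of_notMem hUS
    have hSe_eq : S.erase U = S := Finset.erase_eq_of_notMem hUS
    have hπSd : π \ S = insert U (π.erase U \ S.erase U) := by
      rw [← hu, hS1]
      simp [Finset.insert_eq, -Finset.singleton_union]
    have hUnotin : U ∉ π.erase U \ S.erase U := fun h =>
      (Finset.mem_erase.mp (Finset.mem_sdiff.mp h).1).1 rfl
    have hKv : CcoefOn α β t γ U {U} (S ∩ {U}) = kappa α β t γ U.card := by
      rw [hS1]
      by_cases hU1 : U.card = 1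
      · rw [CcoefOn_single_one α β t γ hU1, kappa, if_pos hU1]
      · have hU2 : 2 ≤ U.card := by
          have := Finset.card_pos.mpr hUne
          omega
        rw [CcoefOn_single_big α β t γ hU2, kappa, if_neg hU1,
          (EFG_val β γ U.card U rfl).2.2 hU2]
    rw [hKv, hπSd, Finset.prod_insert hUnotin, hSe_eq]
    ring

end S15

theorem stmt15 (n : ℕ) (hn : 1 ≤ n) (π S : Finset (Finset (Fin n)))
    (hpart : IsPartition π) (hnc : IsNoncrossing π) (hS : S ⊆ π)
    (houter : ∀ B ∈ S, IsOuter π B) (α β t γ : ℂ) :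
    Ccoef α β t γ π S
      = (∏ U ∈ π \ S, kappa α β t γ U.card) * ∏ V ∈ S, motzkin β γ (V.card - 1) := by
  have hn' : (Finset.univ : Finset (Fin n)).card = n := by simp
  have heq : Ccoef α β t γ π S = S15.CcoefOn α β t γ Finset.univ π S := by
    rw [Ccoef, S15.CcoefOn]
    apply Finset.sum_congr
    · apply Finset.filter_congr
      intro σ _
      constructor
      · rintro ⟨h1, h2⟩
        exact ⟨⟨h1.1, fun B _ => Finset.subset_univ B, fun i _ => h1.2 i⟩, h2⟩
      · rintro ⟨h1, h2⟩
        exact ⟨⟨h1.1, fun i => h1.2.2 i (Finset.mem_univ i)⟩, h2⟩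
    · intro σ _
      rw [hn']
  rw [heq]
  exact S15.CcoefOn_eq α β t γ π.card Finset.univ π S rfl
    ⟨hpart.1, fun B _ => Finset.subset_univ B, fun i _ => hpart.2 i⟩ hnc hS
end
end

section
/- For every n ≥ 1, the number of pairs (π,S), where π is a non-crossing partition of {1,…,n} and S is a set of outer blocks of π, equals the central binomial coefficient C(2n,n). -/
open Finset
open scoped Classical
open scoped Classical

namespace NCAux

def Part (a b : ℕ) (P : Finset (Finset ℕ)) : Prop :=
  (∀ B ∈ P, B.Nonempty ∧ B ⊆ Finset.Ico a b) ∧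
  (∀ i ∈ Finset.Ico a b, ∃ B ∈ P, i ∈ B) ∧
  (∀ B ∈ P, ∀ C ∈ P, B ≠ C → ∀ x ∈ B, x ∉ C)

def NC (P : Finset (Finset ℕ)) : Prop :=
  ∀ U ∈ P, ∀ V ∈ P, U ≠ V → ∀ i ∈ U, ∀ k ∈ U, ∀ j ∈ V, ∀ l ∈ V,
    i < j → j < k → k < l → False

def Out (P : Finset (Finset ℕ)) (V : Finset ℕ) : Prop :=
  ∀ U ∈ P, U ≠ V → ∀ i ∈ U, ∀ j ∈ U, (∀ x ∈ V, i < x ∧ x < j) → False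

def Good (a b : ℕ) (p : Finset (Finset ℕ) × Finset (Finset ℕ)) : Prop :=
  Part a b p.1 ∧ NC p.1 ∧ p.2 ⊆ p.1 ∧ ∀ B ∈ p.2, Out p.1 B

noncomputable def pairs (a b : ℕ) : Finset (Finset (Finset ℕ) × Finset (Finset ℕ)) :=
  ((Finset.Ico a b).powerset.powerset ×ˢ (Finset.Ico a b).powerset.powerset).filter (Good a b)

noncomputable def parts (a b : ℕ) : Finset (Finset (Finset ℕ)) :=
  (Finset.Ico a b).powerset.powerset.filter (fun P => Part a b P ∧ NC P)

lemma mem_pairs {a b : ℕ} {p : Finset (Finset ℕ) × Finset (Finset ℕ)} :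
    p ∈ pairs a b ↔ Good a b p := by
  unfold pairs
  simp only [Finset.mem_filter, Finset.mem_product, Finset.mem_powerset, and_iff_right_iff_imp]
  intro hg
  have h1 : p.1 ⊆ (Finset.Ico a b).powerset := by
    intro B hB
    exact Finset.mem_powerset.2 ((hg.1.1 B hB).2)
  exact ⟨h1, (hg.2.2.1).trans h1⟩

lemma mem_parts {a b : ℕ} {P : Finset (Finset ℕ)} :
    P ∈ parts a b ↔ Part a b P ∧ NC P := by
  unfold parts
  simp only [Finset.mem_filter, Finset.mem_powerset, and_iff_right_iff_imp]
  intro hg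
  intro B hB
  exact Finset.mem_powerset.2 ((hg.1.1 B hB).2)

/-! ### the block containing a given element -/

def blk (m : ℕ) (P : Finset (Finset ℕ)) : Finset ℕ :=
  P.sup (fun B => if m ∈ B then B else ∅)

def mx (a : ℕ) (P : Finset (Finset ℕ)) : ℕ := (blk a P).sup id

lemma blk_eq {m : ℕ} {P : Finset (Finset ℕ)} {B : Finset ℕ}
    (hdisj : ∀ C ∈ P, ∀ D ∈ P, C ≠ D → ∀ x ∈ C, x ∉ D)
    (hB : B ∈ P) (hm : m ∈ B) : blk m P = B := by
  apply Finset.Subset.antisymm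
  · show P.sup (fun B => if m ∈ B then B else ∅) ≤ B
    apply Finset.sup_le
    intro C hC
    by_cases h : m ∈ C
    · simp only [if_pos h]
      by_cases hCB : C = B
      · subst hCB; exact Finset.Subset.refl _
      · exact absurd hm (hdisj C hC B hB hCB m h)
    · simp [if_neg h]
  · have := Finset.le_sup (f := fun B => if m ∈ B then B else ∅) hB
    exact le_trans (le_of_eq (if_pos hm).symm) this

lemma blk_eq_empty {m : ℕ} {P : Finset (Finset ℕ)}
    (h : ∀ B ∈ P, m ∉ B) : blk m P = ∅ := by
  apply Finset.subset_empty.1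
  show P.sup (fun B => if m ∈ B then B else ∅) ≤ ∅
  apply Finset.sup_le
  intro C hC
  simp [if_neg (h C hC)]

lemma sup_id_mem {B : Finset ℕ} (h : B.Nonempty) : B.sup id ∈ B := by
  rw [← Finset.sup'_eq_sup h, ← Finset.max'_eq_sup']
  exact B.max'_mem h

lemma le_sup_id {B : Finset ℕ} {x : ℕ} (h : x ∈ B) : x ≤ B.sup id :=
  Finset.le_sup (f := id) h

section Struct

variable {a b : ℕ} {P : Finset (Finset ℕ)}

lemma blk_mem (hP : Part a b P) (hab : a < b) : blk a P ∈ P ∧ a ∈ blk a P := by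
  obtain ⟨B, hB, haB⟩ := hP.2.1 a (Finset.mem_Ico.2 ⟨le_refl a, hab⟩)
  rw [blk_eq hP.2.2 hB haB]
  exact ⟨hB, haB⟩

lemma mx_mem (hP : Part a b P) (hab : a < b) : mx a P ∈ blk a P :=
  sup_id_mem ⟨a, (blk_mem hP hab).2⟩

lemma le_mx (hP : Part a b P) (hab : a < b) : a ≤ mx a P :=
  le_sup_id (blk_mem hP hab).2

lemma mx_lt (hP : Part a b P) (hab : a < b) : mx a P < b :=
  (Finset.mem_Ico.1 ((hP.1 _ (blk_mem hP hab).1).2 (mx_mem hP hab))).2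

lemma blk_subset (hP : Part a b P) (hab : a < b) :
    blk a P ⊆ Finset.Ico a (mx a P + 1) := by
  intro x hx
  have hx2 := (hP.1 _ (blk_mem hP hab).1).2 hx
  rw [Finset.mem_Ico] at hx2 ⊢
  exact ⟨hx2.1, Nat.lt_succ_of_le (le_sup_id hx)⟩

lemma dich (hP : Part a b P) (hNC : NC P) (hab : a < b) :
    ∀ V ∈ P, V ⊆ Finset.Ico a (mx a P + 1) ∨ V ⊆ Finset.Ico (mx a P + 1) b := by
  intro V hV
  by_cases hVb : V = blk a P
  · left; rw [hVb]; exact blk_subset hP hab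
  · by_contra hcon
    push_neg at hcon
    obtain ⟨hc1, hc2⟩ := hcon
    obtain ⟨x, hxV, hx⟩ := Finset.not_subset.1 hc1
    obtain ⟨y, hyV, hy⟩ := Finset.not_subset.1 hc2
    have hxb := (hP.1 V hV).2 hxV
    have hyb := (hP.1 V hV).2 hyV
    rw [Finset.mem_Ico] at hxb hyb
    rw [Finset.mem_Ico] at hx hy
    push_neg at hx hy
    -- x ≤ mx, y > mx (up to which one fails), take x the one ≤ mx
    have hxy : ∃ x ∈ V, x ≤ mx a P ∧ ∃ y ∈ V, mx a P < y := by
      rcases Nat.lt_or_ge x (mx a P + 1) with h | h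
      · refine ⟨x, hxV, by omega, ?_⟩
        rcases Nat.lt_or_ge (mx a P) y with h2 | h2
        · exact ⟨y, hyV, h2⟩
        · exact absurd (hy (by omega)) (by omega)
      · refine ⟨y, hyV, ?_, x, hxV, by omega⟩
        rcases Nat.lt_or_ge (mx a P) y with h2 | h2
        · exact absurd (hx hxb.1) (by omega)
        · exact h2
    obtain ⟨u, huV, hule, v, hvV, hvgt⟩ := hxy
    have hne : u ≠ a := fun h =>
      hP.2.2 V hV (blk a P) (blk_mem hP hab).1 hVb u huV (h ▸ (blk_mem hP hab).2)
    have hne2 : u ≠ mx a P := fun h =>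
      hP.2.2 V hV (blk a P) (blk_mem hP hab).1 hVb u huV (h ▸ (mx_mem hP hab))
    have hu_lb := ((hP.1 V hV).2 huV)
    rw [Finset.mem_Ico] at hu_lb
    exact hNC (blk a P) (blk_mem hP hab).1 V hV (Ne.symm hVb)
      a (blk_mem hP hab).2 (mx a P) (mx_mem hP hab) u huV v hvV
      (by omega) (by omega) hvgt

end Struct

def mid (a : ℕ) (P : Finset (Finset ℕ)) : Finset (Finset ℕ) :=
  ((P.filter (fun B => B ⊆ Finset.Ico a (mx a P + 1))).image (fun B => B.erase a)).erase ∅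

def rst (a : ℕ) (P : Finset (Finset ℕ)) : Finset (Finset ℕ) :=
  P.filter (fun B => ¬ B ⊆ Finset.Ico a (mx a P + 1))

lemma mem_mid {a : ℕ} {P : Finset (Finset ℕ)} {B' : Finset ℕ} :
    B' ∈ mid a P ↔ B' ≠ ∅ ∧ ∃ B ∈ P, B ⊆ Finset.Ico a (mx a P + 1) ∧ B.erase a = B' := by
  simp [mid, Finset.mem_erase, Finset.mem_image, Finset.mem_filter]
  tauto

lemma mem_rst {a : ℕ} {P : Finset (Finset ℕ)} {B : Finset ℕ} :
    B ∈ rst a P ↔ B ∈ P ∧ ¬ B ⊆ Finset.Ico a (mx a P + 1) := by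
  simp [rst]

lemma NC_mono {P Q : Finset (Finset ℕ)} (h : Q ⊆ P) (hNC : NC P) : NC Q :=
  fun U hU V hV hne i hi k hk j hj l hl h1 h2 h3 =>
    hNC U (h hU) V (h hV) hne i hi k hk j hj l hl h1 h2 h3

lemma part_empty {c d : ℕ} {Q : Finset (Finset ℕ)} (h : Part c d Q) (hcd : d ≤ c) :
    Q = ∅ := by
  rw [Finset.eq_empty_iff_forall_notMem]
  intro B hB
  obtain ⟨⟨x, hx⟩, hsub⟩ := h.1 B hB
  have := Finset.mem_Ico.1 (hsub hx)
  omega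

section Struct2

variable {a b : ℕ} {P : Finset (Finset ℕ)}

lemma mid_part (hP : Part a b P) (hNC : NC P) (hab : a < b) :
    Part (a+1) (mx a P + 1) (mid a P) := by
  refine ⟨?_, ?_, ?_⟩
  · intro B' hB'
    obtain ⟨hne, B, hB, hsub, hBa⟩ := mem_mid.1 hB'
    refine ⟨Finset.nonempty_iff_ne_empty.2 hne, ?_⟩
    intro x hx
    rw [← hBa] at hx
    have h1 := Finset.mem_Ico.1 (hsub (Finset.mem_of_mem_erase hx))
    have h2 := Finset.ne_of_mem_erase hx
    rw [Finset.mem_Ico]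
    omega
  · intro i hi
    rw [Finset.mem_Ico] at hi
    obtain ⟨B, hB, hiB⟩ := hP.2.1 i (Finset.mem_Ico.2 ⟨by omega, by
      have := mx_lt hP hab; omega⟩)
    have hBsub : B ⊆ Finset.Ico a (mx a P + 1) := by
      rcases dich hP hNC hab B hB with h | h
      · exact h
      · have := Finset.mem_Ico.1 (h hiB); omega
    refine ⟨B.erase a, mem_mid.2 ⟨?_, B, hB, hBsub, rfl⟩, Finset.mem_erase.2 ⟨by omega, hiB⟩⟩
    intro h
    have : i ∈ B.erase a := Finset.mem_erase.2 ⟨by omega, hiB⟩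
    rw [h] at this
    exact absurd this (Finset.notMem_empty i)
  · intro B' hB' C' hC' hne x hxB' hxC'
    obtain ⟨hne1, B, hB, hsub1, hBa⟩ := mem_mid.1 hB'
    obtain ⟨hne2, C, hC, hsub2, hCa⟩ := mem_mid.1 hC'
    have hBC : B ≠ C := fun h => hne (by rw [← hBa, ← hCa, h])
    rw [← hBa] at hxB'
    rw [← hCa] at hxC'
    exact hP.2.2 B hB C hC hBC x (Finset.mem_of_mem_erase hxB')
      (Finset.mem_of_mem_erase hxC')

lemma mid_NC (hP : Part a b P) (hNC : NC P) : NC (mid a P) := by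
  intro U' hU' V' hV' hne i hi k hk j hj l hl h1 h2 h3
  obtain ⟨hne1, U, hU, hsub1, hUa⟩ := mem_mid.1 hU'
  obtain ⟨hne2, V, hV, hsub2, hVa⟩ := mem_mid.1 hV'
  have hUV : U ≠ V := fun h => hne (by rw [← hUa, ← hVa, h])
  rw [← hUa] at hi hk
  rw [← hVa] at hj hl
  exact hNC U hU V hV hUV i (Finset.mem_of_mem_erase hi) k (Finset.mem_of_mem_erase hk)
    j (Finset.mem_of_mem_erase hj) l (Finset.mem_of_mem_erase hl) h1 h2 h3

lemma rst_part (hP : Part a b P) (hNC : NC P) (hab : a < b) :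
    Part (mx a P + 1) b (rst a P) := by
  refine ⟨?_, ?_, ?_⟩
  · intro B hB
    obtain ⟨hBP, hnsub⟩ := mem_rst.1 hB
    refine ⟨(hP.1 B hBP).1, ?_⟩
    rcases dich hP hNC hab B hBP with h | h
    · exact absurd h hnsub
    · exact h
  · intro i hi
    rw [Finset.mem_Ico] at hi
    have hmx := le_mx hP hab
    obtain ⟨B, hB, hiB⟩ := hP.2.1 i (Finset.mem_Ico.2 ⟨by omega, hi.2⟩)
    refine ⟨B, mem_rst.2 ⟨hB, ?_⟩, hiB⟩
    intro h
    have := Finset.mem_Ico.1 (h hiB)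
    omega
  · intro B hB C hC hne x hx
    exact hP.2.2 B (mem_rst.1 hB).1 C (mem_rst.1 hC).1 hne x hx

lemma rst_NC (hNC : NC P) {a : ℕ} : NC (rst a P) :=
  NC_mono (Finset.filter_subset _ _) hNC

lemma out_blk (hP : Part a b P) (hab : a < b) : Out P (blk a P) := by
  intro U hU hne i hi j hj hx
  have h1 := (hx a (blk_mem hP hab).2).1
  have h2 := (Finset.mem_Ico.1 ((hP.1 U hU).2 hi)).1
  omega

lemma out_inner (hP : Part a b P) (hNC : NC P) (hab : a < b) {V : Finset ℕ}
    (hV : V ∈ P) (hsub : V ⊆ Finset.Ico a (mx a P + 1)) (hout : Out P V) :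
    V = blk a P := by
  by_contra hne
  apply hout (blk a P) (blk_mem hP hab).1 (fun h => hne h.symm)
    a (blk_mem hP hab).2 (mx a P) (mx_mem hP hab)
  intro x hxV
  have h1 := Finset.mem_Ico.1 (hsub hxV)
  have h2 : x ∉ blk a P := hP.2.2 V hV (blk a P) (blk_mem hP hab).1 hne x hxV
  have h3 : x ≠ a := fun h => h2 (h ▸ (blk_mem hP hab).2)
  have h4 : x ≠ mx a P := fun h => h2 (h ▸ (mx_mem hP hab))
  omega

lemma out_rst_iff (hP : Part a b P) (hNC : NC P) (hab : a < b) {V : Finset ℕ}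
    (hV : V ∈ rst a P) : Out P V ↔ Out (rst a P) V := by
  constructor
  · intro hout U hU hne i hi j hj hx
    exact hout U (mem_rst.1 hU).1 hne i hi j hj hx
  · intro hout U hU hne i hi j hj hx
    obtain ⟨hVP, hVnsub⟩ := mem_rst.1 hV
    have hVsub : V ⊆ Finset.Ico (mx a P + 1) b := by
      rcases dich hP hNC hab V hVP with h | h
      · exact absurd h hVnsub
      · exact h
    rcases dich hP hNC hab U hU with h | h
    · obtain ⟨x, hx0⟩ := (hP.1 V hVP).1
      have hj2 := Finset.mem_Ico.1 (h hj)
      have hx2 := Finset.mem_Ico.1 (hVsub hx0)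
      have := (hx x hx0).2
      omega
    · exact hout U (mem_rst.2 ⟨hU, fun hc => by
        obtain ⟨y, hy⟩ := (hP.1 U hU).1
        have h1 := Finset.mem_Ico.1 (h hy)
        have h2 := Finset.mem_Ico.1 (hc hy)
        omega⟩) hne i hi j hj hx

end Struct2

/-! ### gluing -/

def glue (a M : ℕ) (Q R : Finset (Finset ℕ)) : Finset (Finset ℕ) :=
  insert (insert a (blk M Q)) ((Q.erase (blk M Q)) ∪ R)

section Glue

variable {a b M : ℕ} {Q R : Finset (Finset ℕ)}
variable (haM : a ≤ M) (hMb : M < b)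
variable (hQ : Part (a+1) (M+1) Q) (hQNC : NC Q)
variable (hR : Part (M+1) b R) (hRNC : NC R)

include haM hQ

lemma qM_cases : (M = a ∧ Q = ∅ ∧ blk M Q = ∅) ∨
    (a < M ∧ blk M Q ∈ Q ∧ M ∈ blk M Q) := by
  rcases Nat.eq_or_lt_of_le haM with h | h
  · left
    have hQe : Q = ∅ := part_empty hQ (by omega)
    refine ⟨h.symm, hQe, ?_⟩
    rw [hQe]
    exact blk_eq_empty (by simp)
  · right
    obtain ⟨B, hB, hMB⟩ := hQ.2.1 M (Finset.mem_Ico.2 ⟨by omega, by omega⟩)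
    rw [blk_eq hQ.2.2 hB hMB]
    exact ⟨h, hB, hMB⟩

lemma b0_mem_M : M ∈ insert a (blk M Q) := by
  rcases qM_cases haM hQ with ⟨h1, _, _⟩ | ⟨_, _, h3⟩
  · rw [h1]; exact Finset.mem_insert_self a _
  · exact Finset.mem_insert_of_mem h3

lemma b0_subset : insert a (blk M Q) ⊆ Finset.Ico a (M+1) := by
  intro x hx
  rcases Finset.mem_insert.1 hx with h | h
  · rw [h]; exact Finset.mem_Ico.2 ⟨le_refl a, by omega⟩
  · rcases qM_cases haM hQ with ⟨_, _, h3⟩ | ⟨_, h2, _⟩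
    · rw [h3] at h; exact absurd h (Finset.notMem_empty x)
    · have := Finset.mem_Ico.1 ((hQ.1 _ h2).2 h)
      exact Finset.mem_Ico.2 ⟨by omega, this.2⟩

omit haM in
lemma a_not_mem_Q : ∀ B ∈ Q, a ∉ B := by
  intro B hB h
  have := Finset.mem_Ico.1 ((hQ.1 B hB).2 h)
  omega

omit hQ
include hR

lemma a_not_mem_R : ∀ B ∈ R, a ∉ B := by
  intro B hB h
  have := Finset.mem_Ico.1 ((hR.1 B hB).2 h)
  omega

include hQ

lemma b0_not_mem : insert a (blk M Q) ∉ (Q.erase (blk M Q)) ∪ R := by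
  intro h
  rcases Finset.mem_union.1 h with h | h
  · exact a_not_mem_Q hQ _ (Finset.mem_of_mem_erase h) (Finset.mem_insert_self a _)
  · exact a_not_mem_R haM hR _ h (Finset.mem_insert_self a _)

omit haM in
lemma QR_disj : ∀ B ∈ Q, ∀ C ∈ R, ∀ x ∈ B, x ∉ C := by
  intro B hB C hC x hxB hxC
  have h1 := Finset.mem_Ico.1 ((hQ.1 B hB).2 hxB)
  have h2 := Finset.mem_Ico.1 ((hR.1 C hC).2 hxC)
  omega

include hMb hQNC hRNC

lemma glue_part : Part a b (glue a M Q R) := by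
  refine ⟨?_, ?_, ?_⟩
  · intro B hB
    rcases Finset.mem_insert.1 hB with h | h
    · subst h
      refine ⟨⟨a, Finset.mem_insert_self a _⟩, ?_⟩
      intro x hx
      have := Finset.mem_Ico.1 (b0_subset haM hQ hx)
      exact Finset.mem_Ico.2 ⟨this.1, by omega⟩
    · rcases Finset.mem_union.1 h with h | h
      · have hBQ := Finset.mem_of_mem_erase h
        refine ⟨(hQ.1 B hBQ).1, ?_⟩
        intro x hx
        have := Finset.mem_Ico.1 ((hQ.1 B hBQ).2 hx)
        exact Finset.mem_Ico.2 ⟨by omega, by omega⟩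
      · refine ⟨(hR.1 B h).1, ?_⟩
        intro x hx
        have := Finset.mem_Ico.1 ((hR.1 B h).2 hx)
        exact Finset.mem_Ico.2 ⟨by omega, this.2⟩
  · intro i hi
    rw [Finset.mem_Ico] at hi
    rcases Nat.eq_or_lt_of_le hi.1 with h | h
    · exact ⟨insert a (blk M Q), Finset.mem_insert_self _ _,
        h ▸ Finset.mem_insert_self a _⟩
    · rcases Nat.lt_or_ge M i with h2 | h2
      · obtain ⟨B, hB, hiB⟩ := hR.2.1 i (Finset.mem_Ico.2 ⟨h2, hi.2⟩)
        exact ⟨B, Finset.mem_insert_of_mem (Finset.mem_union_right _ hB), hiB⟩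
      · obtain ⟨B, hB, hiB⟩ := hQ.2.1 i (Finset.mem_Ico.2 ⟨h, by omega⟩)
        by_cases hBq : B = blk M Q
        · exact ⟨insert a (blk M Q), Finset.mem_insert_self _ _,
            Finset.mem_insert_of_mem (hBq ▸ hiB)⟩
        · exact ⟨B, Finset.mem_insert_of_mem (Finset.mem_union_left _
            (Finset.mem_erase.2 ⟨hBq, hB⟩)), hiB⟩
  · intro B hB C hC hne x hxB hxC
    have key : ∀ D ∈ (Q.erase (blk M Q)) ∪ R, ∀ y ∈ insert a (blk M Q), y ∉ D := by
      intro D hD y hy hyD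
      rcases Finset.mem_insert.1 hy with h | h
      · subst h
        rcases Finset.mem_union.1 hD with h | h
        · exact a_not_mem_Q hQ _ (Finset.mem_of_mem_erase h) hyD
        · exact a_not_mem_R haM hR _ h hyD
      · rcases Finset.mem_union.1 hD with h2 | h2
        · exact hQ.2.2 (blk M Q) ((qM_cases haM hQ).elim
            (fun hc => absurd ((hc.2.2) ▸ h) (Finset.notMem_empty y))
            (fun hc => hc.2.1)) D (Finset.mem_of_mem_erase h2)
            (fun hc => (Finset.mem_erase.1 h2).1 hc.symm) y h hyD
        · exact QR_disj hQ hR (blk M Q) ((qM_cases haM hQ).elim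
            (fun hc => absurd ((hc.2.2) ▸ h) (Finset.notMem_empty y))
            (fun hc => hc.2.1)) D h2 y h hyD
    rcases Finset.mem_insert.1 hB with h1 | h1 <;> rcases Finset.mem_insert.1 hC with h2 | h2
    · exact absurd (h1.trans h2.symm) hne
    · subst h1; exact key C h2 x hxB hxC
    · subst h2; exact key B h1 x hxC hxB
    · -- both in union
      rcases Finset.mem_union.1 h1 with hB1 | hB1 <;> rcases Finset.mem_union.1 h2 with hC1 | hC1
      · exact hQ.2.2 B (Finset.mem_of_mem_erase hB1) C (Finset.mem_of_mem_erase hC1) hne x hxB hxC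
      · exact QR_disj hQ hR B (Finset.mem_of_mem_erase hB1) C hC1 x hxB hxC
      · exact QR_disj hQ hR C (Finset.mem_of_mem_erase hC1) B hB1 x hxC hxB
      · exact hR.2.2 B hB1 C hC1 hne x hxB hxC

lemma glue_NC : NC (glue a M Q R) := by
  have hQb : ∀ B ∈ Q, ∀ x ∈ B, a + 1 ≤ x ∧ x < M + 1 :=
    fun B hB x hx => Finset.mem_Ico.1 ((hQ.1 B hB).2 hx)
  have hRb : ∀ B ∈ R, ∀ x ∈ B, M + 1 ≤ x ∧ x < b :=
    fun B hB x hx => Finset.mem_Ico.1 ((hR.1 B hB).2 hx)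
  intro U hU V hV hne i hi k hk j hj l hl h1 h2 h3
  have hunion : ∀ U' ∈ (Q.erase (blk M Q)) ∪ R, ∀ V' ∈ (Q.erase (blk M Q)) ∪ R,
      U' ≠ V' → ∀ i' ∈ U', ∀ k' ∈ U', ∀ j' ∈ V', ∀ l' ∈ V',
      i' < j' → j' < k' → k' < l' → False := by
    intro U' hU' V' hV' hne' i' hi' k' hk' j' hj' l' hl' g1 g2 g3
    rcases Finset.mem_union.1 hU' with hU1 | hU1 <;> rcases Finset.mem_union.1 hV' with hV1 | hV1
    · exact hQNC U' (Finset.mem_of_mem_erase hU1) V' (Finset.mem_of_mem_erase hV1) hne'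
        i' hi' k' hk' j' hj' l' hl' g1 g2 g3
    · have := (hRb V' hV1 j' hj').1
      have := (hQb U' (Finset.mem_of_mem_erase hU1) k' hk').2
      omega
    · have := (hRb U' hU1 i' hi').1
      have := (hQb V' (Finset.mem_of_mem_erase hV1) j' hj').2
      omega
    · exact hRNC U' hU1 V' hV1 hne' i' hi' k' hk' j' hj' l' hl' g1 g2 g3
  rcases Finset.mem_insert.1 hU with hU1 | hU1 <;> rcases Finset.mem_insert.1 hV with hV1 | hV1
  · exact hne (hU1.trans hV1.symm)
  · -- U = B₀
    subst hU1
    rcases Finset.mem_union.1 hV1 with hV2 | hV2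
    · -- V ∈ Q.erase qM
      have hVQ := Finset.mem_of_mem_erase hV2
      obtain ⟨_, hqMQ, hMqM⟩ := (qM_cases haM hQ).resolve_left
        (fun hc => by rw [hc.2.1] at hVQ; exact absurd hVQ (Finset.notMem_empty V))
      have hjb := hQb V hVQ j hj
      have hlb := hQb V hVQ l hl
      have hkq : k ∈ blk M Q := by
        rcases Finset.mem_insert.1 hk with h | h
        · omega
        · exact h
      have hlM : l ≠ M := fun h => hQ.2.2 V hVQ (blk M Q) hqMQ
          (Finset.mem_erase.1 hV2).1 l hl (h ▸ hMqM)
      exact hQNC V hVQ (blk M Q) hqMQ (Finset.mem_erase.1 hV2).1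
        j hj l hl k hkq M hMqM h2 h3 (by omega)
    · -- V ∈ R
      have hjb := hRb V hV2 j hj
      have hkb : k < M + 1 := by
        have := Finset.mem_Ico.1 (b0_subset haM hQ hk)
        omega
      omega
  · -- V = B₀
    subst hV1
    rcases Finset.mem_union.1 hU1 with hU2 | hU2
    · have hUQ := Finset.mem_of_mem_erase hU2
      obtain ⟨_, hqMQ, hMqM⟩ := (qM_cases haM hQ).resolve_left
        (fun hc => by rw [hc.2.1] at hUQ; exact absurd hUQ (Finset.notMem_empty U))
      have hib := hQb U hUQ i hi
      have hkb := hQb U hUQ k hk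
      have hjq : j ∈ blk M Q := by
        rcases Finset.mem_insert.1 hj with h | h
        · omega
        · exact h
      have hlq : l ∈ blk M Q := by
        rcases Finset.mem_insert.1 hl with h | h
        · omega
        · exact h
      exact hQNC U hUQ (blk M Q) hqMQ (Finset.mem_erase.1 hU2).1
        i hi k hk j hjq l hlq h1 h2 h3
    · have hib := hRb U hU2 i hi
      have hjb : j < M + 1 := by
        have := Finset.mem_Ico.1 (b0_subset haM hQ hj)
        omega
      omega
  · exact hunion U hU1 V hV1 hne i hi k hk j hj l hl h1 h2 h3

lemma glue_blk : blk a (glue a M Q R) = insert a (blk M Q) :=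
  blk_eq (glue_part haM hMb hQ hQNC hR hRNC).2.2 (Finset.mem_insert_self _ _)
    (Finset.mem_insert_self a _)

lemma glue_mx : mx a (glue a M Q R) = M := by
  unfold mx
  rw [glue_blk haM hMb hQ hQNC hR hRNC]
  apply le_antisymm
  · apply Finset.sup_le
    intro x hx
    have := Finset.mem_Ico.1 (b0_subset haM hQ hx)
    simp only [id]
    omega
  · exact le_sup_id (b0_mem_M haM hQ)

lemma glue_mid : mid a (glue a M Q R) = Q := by
  have hmx := glue_mx haM hMb hQ hQNC hR hRNC
  have haq : a ∉ blk M Q := by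
    rcases qM_cases haM hQ with ⟨_, _, h3⟩ | ⟨_, h2, _⟩
    · rw [h3]; exact Finset.notMem_empty a
    · exact a_not_mem_Q hQ _ h2
  ext B'
  rw [mem_mid, hmx]
  constructor
  · rintro ⟨hne, B, hB, hsub, hBa⟩
    rcases Finset.mem_insert.1 hB with h | h
    · subst h
      rw [Finset.erase_insert haq] at hBa
      subst hBa
      rcases qM_cases haM hQ with ⟨_, _, h3⟩ | ⟨_, h2, _⟩
      · exact absurd h3 hne
      · exact h2
    · rcases Finset.mem_union.1 h with h | h
      · have hBQ := Finset.mem_of_mem_erase h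
        rw [Finset.erase_eq_of_notMem (a_not_mem_Q hQ _ hBQ)] at hBa
        exact hBa ▸ hBQ
      · obtain ⟨x, hx⟩ := (hR.1 B h).1
        have := Finset.mem_Ico.1 (hsub hx)
        have := Finset.mem_Ico.1 ((hR.1 B h).2 hx)
        omega
  · intro hB'
    refine ⟨Finset.nonempty_iff_ne_empty.1 (hQ.1 B' hB').1, ?_⟩
    by_cases h : B' = blk M Q
    · refine ⟨insert a (blk M Q), Finset.mem_insert_self _ _, b0_subset haM hQ, ?_⟩
      rw [Finset.erase_insert haq, h]
    · refine ⟨B', Finset.mem_insert_of_mem (Finset.mem_union_left _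
        (Finset.mem_erase.2 ⟨h, hB'⟩)), ?_, ?_⟩
      · intro x hx
        have := Finset.mem_Ico.1 ((hQ.1 B' hB').2 hx)
        exact Finset.mem_Ico.2 ⟨by omega, this.2⟩
      · exact Finset.erase_eq_of_notMem (a_not_mem_Q hQ _ hB')

lemma glue_rst : rst a (glue a M Q R) = R := by
  have hmx := glue_mx haM hMb hQ hQNC hR hRNC
  ext B
  rw [mem_rst, hmx]
  constructor
  · rintro ⟨hB, hnsub⟩
    rcases Finset.mem_insert.1 hB with h | h
    · exact absurd (h ▸ b0_subset haM hQ) hnsub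
    · rcases Finset.mem_union.1 h with h | h
      · exfalso
        apply hnsub
        intro x hx
        have := Finset.mem_Ico.1 ((hQ.1 _ (Finset.mem_of_mem_erase h)).2 hx)
        exact Finset.mem_Ico.2 ⟨by omega, this.2⟩
      · exact h
  · intro hB
    refine ⟨Finset.mem_insert_of_mem (Finset.mem_union_right _ hB), ?_⟩
    intro hsub
    obtain ⟨x, hx⟩ := (hR.1 B hB).1
    have := Finset.mem_Ico.1 (hsub hx)
    have := Finset.mem_Ico.1 ((hR.1 B hB).2 hx)
    omega

end Glue

section RoundTrip

variable {a b : ℕ} {P : Finset (Finset ℕ)}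

lemma blk_mid (hP : Part a b P) (hNC : NC P) (hab : a < b) :
    blk (mx a P) (mid a P) = (blk a P).erase a := by
  rcases Nat.eq_or_lt_of_le (le_mx hP hab) with h | h
  · -- mx = a, blk a P = {a}
    have hb0 : blk a P = {a} := by
      apply Finset.Subset.antisymm
      · intro x hx
        have h1 := Finset.mem_Ico.1 ((blk_subset hP hab) hx)
        rw [Finset.mem_singleton]
        omega
      · intro x hx
        rw [Finset.mem_singleton] at hx
        exact hx ▸ (blk_mem hP hab).2
    rw [hb0, Finset.erase_singleton]
    apply blk_eq_empty
    intro B hB hmxB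
    obtain ⟨hne, B', hB', hsub, hBa⟩ := mem_mid.1 hB
    rw [← hBa] at hmxB
    exact (Finset.mem_erase.1 hmxB).1 h.symm
  · -- a < mx
    have hmem : (blk a P).erase a ∈ mid a P := by
      apply mem_mid.2
      refine ⟨?_, blk a P, (blk_mem hP hab).1, blk_subset hP hab, rfl⟩
      intro hc
      have : mx a P ∈ (blk a P).erase a := Finset.mem_erase.2 ⟨by omega, mx_mem hP hab⟩
      rw [hc] at this
      exact absurd this (Finset.notMem_empty _)
    exact blk_eq (mid_part hP hNC hab).2.2 hmem
      (Finset.mem_erase.2 ⟨by omega, mx_mem hP hab⟩)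

lemma glue_roundtrip (hP : Part a b P) (hNC : NC P) (hab : a < b) :
    glue a (mx a P) (mid a P) (rst a P) = P := by
  unfold glue
  rw [blk_mid hP hNC hab, Finset.insert_erase (blk_mem hP hab).2]
  have hmid_erase : (mid a P).erase ((blk a P).erase a)
      = (P.filter (fun B => B ⊆ Finset.Ico a (mx a P + 1))).erase (blk a P) := by
    ext B'
    rw [Finset.mem_erase, mem_mid, Finset.mem_erase, Finset.mem_filter]
    constructor
    · rintro ⟨hne1, hne2, B, hB, hsub, hBa⟩
      by_cases h : B = blk a P
      · exact absurd (h ▸ hBa).symm hne1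
      · have haB : a ∉ B := fun hc =>
          hP.2.2 B hB (blk a P) (blk_mem hP hab).1 h a hc (blk_mem hP hab).2
        rw [Finset.erase_eq_of_notMem haB] at hBa
        subst hBa
        exact ⟨h, hB, hsub⟩
    · rintro ⟨hne1, hB, hsub⟩
      have haB : a ∉ B' := fun hc =>
        hP.2.2 B' hB (blk a P) (blk_mem hP hab).1 hne1 a hc (blk_mem hP hab).2
      refine ⟨?_, ?_, B', hB, hsub, Finset.erase_eq_of_notMem haB⟩
      · intro hc
        obtain ⟨x, hx⟩ := (hP.1 B' hB).1
        have hxblk : x ∈ blk a P := Finset.mem_of_mem_erase (hc ▸ hx)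
        exact hP.2.2 B' hB (blk a P) (blk_mem hP hab).1 hne1 x hx hxblk
      · intro hc
        rw [hc] at hB
        exact absurd (Finset.nonempty_iff_ne_empty.1 (hP.1 ∅ hB).1) (fun h => h rfl)
  rw [hmid_erase]
  ext B
  simp only [Finset.mem_insert, Finset.mem_union, Finset.mem_erase, Finset.mem_filter, mem_rst]
  constructor
  · rintro (h | ⟨_, h, _⟩ | ⟨h, _⟩) <;> first | (exact h ▸ (blk_mem hP hab).1) | exact h
  · intro hB
    by_cases h1 : B = blk a P
    · exact Or.inl h1
    · by_cases h2 : B ⊆ Finset.Ico a (mx a P + 1)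
      · exact Or.inr (Or.inl ⟨h1, hB, h2⟩)
      · exact Or.inr (Or.inr ⟨hB, h2⟩)

end RoundTrip

/-! ### fiberwise counting -/

lemma parts_fiber {a b : ℕ} (M : ℕ) (hab : a < b) (haM : a ≤ M) (hMb : M < b) :
    ((parts a b).filter (fun P => mx a P = M)).card
      = ((parts (a+1) (M+1)) ×ˢ (parts (M+1) b)).card := by
  apply Finset.card_nbij' (i := fun P => (mid a P, rst a P))
    (j := fun q => glue a M q.1 q.2)
  · intro P hP
    rw [Finset.mem_coe, Finset.mem_filter, mem_parts] at hP
    obtain ⟨⟨hP1, hP2⟩, hmx⟩ := hP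
    rw [Finset.mem_coe, Finset.mem_product, mem_parts, mem_parts]
    exact ⟨⟨hmx ▸ mid_part hP1 hP2 hab, mid_NC hP1 hP2⟩,
      ⟨hmx ▸ rst_part hP1 hP2 hab, rst_NC hP2⟩⟩
  · intro q hq
    rw [Finset.mem_coe, Finset.mem_product, mem_parts, mem_parts] at hq
    obtain ⟨⟨hQ1, hQ2⟩, hR1, hR2⟩ := hq
    rw [Finset.mem_coe, Finset.mem_filter, mem_parts]
    exact ⟨⟨glue_part haM hMb hQ1 hQ2 hR1 hR2, glue_NC haM hMb hQ1 hQ2 hR1 hR2⟩,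
      glue_mx haM hMb hQ1 hQ2 hR1 hR2⟩
  · intro P hP
    rw [Finset.mem_coe, Finset.mem_filter, mem_parts] at hP
    obtain ⟨⟨hP1, hP2⟩, hmx⟩ := hP
    rw [← hmx]
    exact glue_roundtrip hP1 hP2 hab
  · intro q hq
    rw [Finset.mem_coe, Finset.mem_product, mem_parts, mem_parts] at hq
    obtain ⟨⟨hQ1, hQ2⟩, hR1, hR2⟩ := hq
    exact Prod.ext (glue_mid haM hMb hQ1 hQ2 hR1 hR2) (glue_rst haM hMb hQ1 hQ2 hR1 hR2)

lemma parts_card : ∀ n a b : ℕ, b - a = n → (parts a b).card = catalan n := by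
  intro n
  induction n using Nat.strong_induction_on with
  | _ n ih =>
    intro a b hab
    rcases Nat.eq_zero_or_pos n with hn | hn
    · subst hn
      have hba : b ≤ a := by omega
      have : parts a b = {∅} := by
        ext P
        rw [mem_parts, Finset.mem_singleton]
        constructor
        · intro ⟨h1, _⟩
          exact part_empty h1 hba
        · intro h
          subst h
          refine ⟨⟨?_, ?_, ?_⟩, ?_⟩
          · intro B h; exact absurd h (Finset.notMem_empty B)
          · intro i hi
            have := Finset.mem_Ico.1 hi
            omega
          · intro B h; exact absurd h (Finset.notMem_empty B)
          · intro U h; exact absurd h (Finset.notMem_empty U)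
      rw [this, Finset.card_singleton, catalan_zero]
    · have hab' : a < b := by omega
      rw [Finset.card_eq_sum_card_fiberwise (f := fun P => mx a P) (t := Finset.Ico a b)
        (fun P hP => by
          rw [Finset.mem_coe, mem_parts] at hP
          exact Finset.mem_Ico.2 ⟨le_mx hP.1 hab', mx_lt hP.1 hab'⟩)]
      have hsum : ∀ M ∈ Finset.Ico a b,
          ((parts a b).filter (fun P => mx a P = M)).card
            = catalan (M - a) * catalan (b - M - 1) := by
        intro M hM
        rw [Finset.mem_Ico] at hM
        rw [parts_fiber M hab' hM.1 hM.2, Finset.card_product,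
          ih (M - a) (by omega) (a+1) (M+1) (by omega),
          ih (b - M - 1) (by omega) (M+1) b (by omega)]
      rw [Finset.sum_congr rfl hsum, Finset.sum_Ico_eq_sum_range]
      have hn1 : n = (n - 1) + 1 := by omega
      rw [hn1, catalan_succ']
      rw [Finset.Nat.sum_antidiagonal_eq_sum_range_succ (fun i j => catalan i * catalan j)]
      have : b - a = n - 1 + 1 := by omega
      rw [this]
      apply Finset.sum_congr rfl
      intro k hk
      rw [Finset.mem_range] at hk
      congr 1
      · congr 1; omega
      · congr 1; omega

theorem numKey (n : ℕ) :
    ∑ k ∈ range (n+1), 2 * (catalan k * Nat.centralBinom (n-k)) = Nat.centralBinom (n+1) := by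
  have h1 : ∀ k ∈ range (n+1), 2 * (catalan k * Nat.centralBinom (n-k))
      = 2 * ((n-k+1) * (catalan k * catalan (n-k))) := by
    intro k hk
    rw [← succ_mul_catalan_eq_centralBinom]
    ring
  rw [Finset.sum_congr rfl h1, ← Finset.mul_sum]
  have h2 := Finset.sum_range_reflect (fun j => (j+1) * (catalan j * catalan (n-j))) (n+1)
  have h3 : ∑ j ∈ range (n+1), (n+1-1-j+1) * (catalan (n+1-1-j) * catalan (n-(n+1-1-j)))
      = ∑ j ∈ range (n+1), (n-j+1) * (catalan (n-j) * catalan j) := by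
    apply Finset.sum_congr rfl
    intro j hj
    simp only [Finset.mem_range] at hj
    have e1 : n+1-1-j = n - j := by omega
    have e2 : n - (n-j) = j := by omega
    rw [e1, e2]
  rw [h3] at h2
  have h4 : 2 * ∑ k ∈ range (n+1), (n-k+1) * (catalan k * catalan (n-k))
      = ∑ k ∈ range (n+1), ((n-k+1) + (k+1)) * (catalan k * catalan (n-k)) := by
    rw [two_mul]
    nth_rewrite 1 [show (∑ k ∈ range (n+1), (n-k+1) * (catalan k * catalan (n-k)))
      = ∑ j ∈ range (n+1), (n-j+1) * (catalan (n-j) * catalan j) from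
        Finset.sum_congr rfl (fun k _ => by ring)]
    rw [h2]
    rw [← Finset.sum_add_distrib]
    exact Finset.sum_congr rfl (fun k _ => by ring)
  rw [h4]
  have h5 : ∀ k ∈ range (n+1), ((n-k+1) + (k+1)) * (catalan k * catalan (n-k))
      = (n+2) * (catalan k * catalan (n-k)) := by
    intro k hk
    simp only [Finset.mem_range] at hk
    congr 1
    omega
  rw [Finset.sum_congr rfl h5, ← Finset.mul_sum]
  have h6 : ∑ k ∈ range (n+1), catalan k * catalan (n-k) = catalan (n+1) := by
    rw [catalan_succ']
    rw [Finset.Nat.sum_antidiagonal_eq_sum_range_succ (fun i j => catalan i * catalan j)]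
  rw [h6, ← succ_mul_catalan_eq_centralBinom]

lemma pairs_fiber {a b : ℕ} (M : ℕ) (hab : a < b) (haM : a ≤ M) (hMb : M < b) :
    ((pairs a b).filter (fun p => mx a p.1 = M)).card
      = ((Finset.univ : Finset Bool) ×ˢ ((parts (a+1) (M+1)) ×ˢ (pairs (M+1) b))).card := by
  apply Finset.card_nbij'
    (i := fun p => (decide (blk a p.1 ∈ p.2), (mid a p.1, (rst a p.1, p.2.erase (blk a p.1)))))
    (j := fun q => (glue a M q.2.1 q.2.2.1,
      (if q.1 = true then {insert a (blk M q.2.1)} else ∅) ∪ q.2.2.2))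
  · -- i maps into target
    intro p hp
    rw [Finset.mem_coe, Finset.mem_filter, mem_pairs] at hp
    obtain ⟨⟨hP1, hP2, hS1, hS2⟩, hmx⟩ := hp
    rw [Finset.mem_coe, Finset.mem_product, Finset.mem_product, mem_parts, mem_pairs]
    refine ⟨Finset.mem_univ _, ⟨hmx ▸ mid_part hP1 hP2 hab, mid_NC hP1 hP2⟩, ?_⟩
    have hrstmem : ∀ B ∈ p.2.erase (blk a p.1), B ∈ rst a p.1 := by
      intro B hB
      have hBS := Finset.mem_of_mem_erase hB
      have hBP := hS1 hBS
      rw [mem_rst]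
      refine ⟨hBP, fun hc => (Finset.mem_erase.1 hB).1 ?_⟩
      exact out_inner hP1 hP2 hab hBP hc (hS2 B hBS)
    refine ⟨hmx ▸ rst_part hP1 hP2 hab, rst_NC hP2, fun B hB => hrstmem B hB, ?_⟩
    intro B hB
    exact (out_rst_iff hP1 hP2 hab (hrstmem B hB)).1 (hS2 B (Finset.mem_of_mem_erase hB))
  · -- j maps into source
    intro q hq
    obtain ⟨bit, Q, R, S⟩ := q
    rw [Finset.mem_coe, Finset.mem_product, Finset.mem_product, mem_parts, mem_pairs] at hq
    obtain ⟨-, ⟨hQ1, hQ2⟩, hR1, hR2, hS1, hS2⟩ := hq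
    dsimp only at hQ1 hQ2 hR1 hR2 hS1 hS2 ⊢
    rw [Finset.mem_coe, Finset.mem_filter, mem_pairs]
    have hgP := glue_part haM hMb hQ1 hQ2 hR1 hR2
    have hgNC := glue_NC haM hMb hQ1 hQ2 hR1 hR2
    have hgrst := glue_rst haM hMb hQ1 hQ2 hR1 hR2
    refine ⟨⟨hgP, hgNC, ?_, ?_⟩, glue_mx haM hMb hQ1 hQ2 hR1 hR2⟩
    · intro B hB
      rcases Finset.mem_union.1 hB with h | h
      · cases bit
        · simp only [if_neg Bool.false_ne_true] at h
          exact absurd h (Finset.notMem_empty B)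
        · rw [if_pos rfl, Finset.mem_singleton] at h
          show B ∈ insert (insert a (blk M Q)) ((Q.erase (blk M Q)) ∪ R)
          rw [h]
          exact Finset.mem_insert_self _ _
      · exact Finset.mem_insert_of_mem (Finset.mem_union_right _ (hS1 h))
    · intro B hB
      rcases Finset.mem_union.1 hB with h | h
      · have hB0 : B = insert a (blk M Q) := by
          cases bit
          · simp only [if_neg Bool.false_ne_true] at h
            exact absurd h (Finset.notMem_empty B)
          · rw [if_pos rfl, Finset.mem_singleton] at h
            exact h
        have := out_blk hgP hab
        rwa [glue_blk haM hMb hQ1 hQ2 hR1 hR2, ← hB0] at this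
      · have hBrst : B ∈ rst a (glue a M Q R) := by rw [hgrst]; exact hS1 h
        have := (out_rst_iff hgP hgNC hab hBrst).2
        rw [hgrst] at this
        exact this (hS2 B h)
  · -- left inverse
    intro p hp
    rw [Finset.mem_coe, Finset.mem_filter, mem_pairs] at hp
    obtain ⟨⟨hP1, hP2, hS1, hS2⟩, hmx⟩ := hp
    have h1 : glue a M (mid a p.1) (rst a p.1) = p.1 := hmx ▸ glue_roundtrip hP1 hP2 hab
    have h2 : insert a (blk M (mid a p.1)) = blk a p.1 := by
      rw [← hmx, blk_mid hP1 hP2 hab, Finset.insert_erase (blk_mem hP1 hab).2]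
    have h3 : (if decide (blk a p.1 ∈ p.2) = true then {insert a (blk M (mid a p.1))} else ∅)
        ∪ p.2.erase (blk a p.1) = p.2 := by
      by_cases hmem : blk a p.1 ∈ p.2
      · rw [if_pos (by simpa using hmem), h2, ← Finset.insert_eq,
          Finset.insert_erase hmem]
      · rw [if_neg (by simpa using hmem), Finset.empty_union,
          Finset.erase_eq_of_notMem hmem]
    exact Prod.ext h1 h3
  · -- right inverse
    intro q hq
    obtain ⟨bit, Q, R, S⟩ := q
    rw [Finset.mem_coe, Finset.mem_product, Finset.mem_product, mem_parts, mem_pairs] at hq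
    obtain ⟨-, ⟨hQ1, hQ2⟩, hR1, hR2, hS1, hS2⟩ := hq
    dsimp only at hQ1 hQ2 hR1 hR2 hS1 hS2 ⊢
    have hgblk := glue_blk haM hMb hQ1 hQ2 hR1 hR2
    have hgmid := glue_mid haM hMb hQ1 hQ2 hR1 hR2
    have hgrst := glue_rst haM hMb hQ1 hQ2 hR1 hR2
    have hB0notS : insert a (blk M Q) ∉ S := by
      intro hc
      exact a_not_mem_R haM hR1 _ (hS1 hc) (Finset.mem_insert_self a _)
    have hSide : ((if bit = true then {insert a (blk M Q)} else ∅) ∪ S).erase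
        (blk a (glue a M Q R)) = S := by
      rw [hgblk]
      cases bit
      · rw [if_neg Bool.false_ne_true, Finset.empty_union,
          Finset.erase_eq_of_notMem hB0notS]
      · rw [if_pos rfl, ← Finset.insert_eq, Finset.erase_insert hB0notS]
    have hBit : decide (blk a (glue a M Q R)
        ∈ (if bit = true then {insert a (blk M Q)} else ∅) ∪ S) = bit := by
      rw [hgblk]
      cases bit
      · rw [if_neg Bool.false_ne_true]
        simp only [Finset.empty_union]
        exact decide_eq_false hB0notS
      · rw [if_pos rfl]
        exact decide_eq_true (Finset.mem_union_left _ (Finset.mem_singleton_self _))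
    exact Prod.ext hBit (Prod.ext hgmid (Prod.ext hgrst hSide))

lemma pairs_card : ∀ n a b : ℕ, b - a = n → (pairs a b).card = Nat.centralBinom n := by
  intro n
  induction n using Nat.strong_induction_on with
  | _ n ih =>
    intro a b hab
    rcases Nat.eq_zero_or_pos n with hn | hn
    · subst hn
      have hba : b ≤ a := by omega
      have : pairs a b = {(∅, ∅)} := by
        ext p
        rw [mem_pairs, Finset.mem_singleton]
        constructor
        · intro ⟨h1, _, h3, _⟩
          have hp1 : p.1 = ∅ := part_empty h1 hba
          have hp2 : p.2 = ∅ := Finset.subset_empty.1 (hp1 ▸ h3)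
          exact Prod.ext hp1 hp2
        · intro h
          subst h
          refine ⟨⟨?_, ?_, ?_⟩, ?_, ?_, ?_⟩
          · intro B h; exact absurd h (Finset.notMem_empty B)
          · intro i hi
            have := Finset.mem_Ico.1 hi
            omega
          · intro B h; exact absurd h (Finset.notMem_empty B)
          · intro U h; exact absurd h (Finset.notMem_empty U)
          · exact Finset.Subset.refl _
          · intro B h; exact absurd h (Finset.notMem_empty B)
      rw [this, Finset.card_singleton, Nat.centralBinom_zero]
    · have hab' : a < b := by omega
      rw [Finset.card_eq_sum_card_fiberwise (f := fun p => mx a p.1) (t := Finset.Ico a b)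
        (fun p hp => by
          rw [Finset.mem_coe, mem_pairs] at hp
          exact Finset.mem_Ico.2 ⟨le_mx hp.1 hab', mx_lt hp.1 hab'⟩)]
      have hsum : ∀ M ∈ Finset.Ico a b,
          ((pairs a b).filter (fun p => mx a p.1 = M)).card
            = 2 * (catalan (M - a) * Nat.centralBinom (b - M - 1)) := by
        intro M hM
        rw [Finset.mem_Ico] at hM
        rw [pairs_fiber M hab' hM.1 hM.2, Finset.card_product, Finset.card_product,
          Finset.card_univ, Fintype.card_bool,
          parts_card (M - a) (a+1) (M+1) (by omega),
          ih (b - M - 1) (by omega) (M+1) b (by omega)]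
      rw [Finset.sum_congr rfl hsum, Finset.sum_Ico_eq_sum_range]
      have hn1 : n = (n - 1) + 1 := by omega
      rw [hn1, ← numKey]
      have : b - a = n - 1 + 1 := by omega
      rw [this]
      apply Finset.sum_congr rfl
      intro k hk
      rw [Finset.mem_range] at hk
      congr 2
      · congr 1; omega
      · congr 1; omega

end NCAux

namespace NCAux

variable {n : ℕ}

noncomputable def push (P : Finset (Finset (Fin n))) : Finset (Finset ℕ) :=
  P.image (fun B => B.image Fin.val)

noncomputable def pull (P : Finset (Finset ℕ)) : Finset (Finset (Fin n)) :=
  P.image (fun B => Finset.univ.filter (fun i : Fin n => (i : ℕ) ∈ B))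

lemma pull_push (P : Finset (Finset (Fin n))) : pull (push P) = P := by
  unfold pull push
  rw [Finset.image_image]
  have : ∀ B ∈ P, (Finset.univ.filter (fun i : Fin n => (i : ℕ) ∈ B.image Fin.val)) = B := by
    intro B hB
    ext i
    simp only [Finset.mem_filter, Finset.mem_univ, true_and, Finset.mem_image]
    constructor
    · rintro ⟨u, hu, huv⟩
      exact (Fin.val_injective huv) ▸ hu
    · intro h
      exact ⟨i, h, rfl⟩
  calc P.image _ = P.image id := Finset.image_congr (fun B hB => this B hB)
    _ = P := Finset.image_id

lemma push_pull {P : Finset (Finset ℕ)} (hP : ∀ B ∈ P, B ⊆ Finset.Ico 0 n) :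
    push (pull P : Finset (Finset (Fin n))) = P := by
  unfold pull push
  rw [Finset.image_image]
  have : ∀ B ∈ P, ((Finset.univ.filter
      (fun i : Fin n => (i : ℕ) ∈ B)).image Fin.val) = B := by
    intro B hB
    ext x
    simp only [Finset.mem_image, Finset.mem_filter, Finset.mem_univ, true_and]
    constructor
    · rintro ⟨u, hu, huv⟩
      exact huv ▸ hu
    · intro h
      have hx : x < n := (Finset.mem_Ico.1 (hP B hB h)).2
      exact ⟨⟨x, hx⟩, h, rfl⟩
  calc P.image _ = P.image id := Finset.image_congr (fun B hB => this B hB)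
    _ = P := Finset.image_id

theorem main_transport (n : ℕ) :
    ((Finset.univ :
        Finset (Finset (Finset (Fin n)) × Finset (Finset (Fin n)))).filter
      (fun p => IsPartition p.1 ∧ IsNoncrossing p.1 ∧ p.2 ⊆ p.1 ∧
        ∀ B ∈ p.2, IsOuter p.1 B)).card = (pairs 0 n).card := by
  apply Finset.card_nbij' (i := fun p => (push p.1, push p.2))
    (j := fun q => (pull q.1, pull q.2))
  · -- forward membership
    intro p hp
    rw [Finset.mem_coe, Finset.mem_filter] at hp
    obtain ⟨-, ⟨hPne, hPcov⟩, hNC, hS1, hS2⟩ := hp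
    rw [Finset.mem_coe, mem_pairs]
    have hdisj : ∀ B ∈ p.1, ∀ C ∈ p.1, B ≠ C → ∀ x : Fin n, x ∈ B → x ∉ C := by
      intro B hB C hC hne x hxB hxC
      obtain ⟨D, -, hDuniq⟩ := hPcov x
      exact hne ((hDuniq B ⟨hB, hxB⟩).trans (hDuniq C ⟨hC, hxC⟩).symm)
    have hmem_push : ∀ {B'}, B' ∈ push p.1 → ∃ B ∈ p.1, B.image Fin.val = B' := by
      intro B' h
      obtain ⟨B, hB, hBv⟩ := Finset.mem_image.1 h
      exact ⟨B, hB, hBv⟩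
    refine ⟨⟨?_, ?_, ?_⟩, ?_, ?_, ?_⟩
    · intro B' hB'
      obtain ⟨B, hB, hBv⟩ := hmem_push hB'
      subst hBv
      refine ⟨(hPne B hB).image Fin.val, ?_⟩
      intro x hx
      obtain ⟨u, -, huv⟩ := Finset.mem_image.1 hx
      exact Finset.mem_Ico.2 ⟨Nat.zero_le x, huv ▸ u.isLt⟩
    · intro i hi
      have hin : i < n := (Finset.mem_Ico.1 hi).2
      obtain ⟨B, ⟨hB, hiB⟩, -⟩ := hPcov ⟨i, hin⟩
      exact ⟨B.image Fin.val, Finset.mem_image_of_mem _ hB,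
        Finset.mem_image_of_mem _ hiB⟩
    · intro B' hB' C' hC' hne x hxB' hxC'
      obtain ⟨B, hB, hBv⟩ := hmem_push hB'
      obtain ⟨C, hC, hCv⟩ := hmem_push hC'
      subst hBv; subst hCv
      obtain ⟨u, hu, huv⟩ := Finset.mem_image.1 hxB'
      obtain ⟨v, hv, hvv⟩ := Finset.mem_image.1 hxC'
      have huv2 : u = v := Fin.val_injective (huv.trans hvv.symm)
      have hBC : B ≠ C := fun h => hne (by rw [h])
      exact hdisj B hB C hC hBC u hu (huv2 ▸ hv)
    · intro U' hU' V' hV' hne i hi k hk j hj l hl h1 h2 h3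
      obtain ⟨U, hU, hUv⟩ := hmem_push hU'
      obtain ⟨V, hV, hVv⟩ := hmem_push hV'
      subst hUv; subst hVv
      obtain ⟨i0, hi0, hi0v⟩ := Finset.mem_image.1 hi
      obtain ⟨k0, hk0, hk0v⟩ := Finset.mem_image.1 hk
      obtain ⟨j0, hj0, hj0v⟩ := Finset.mem_image.1 hj
      obtain ⟨l0, hl0, hl0v⟩ := Finset.mem_image.1 hl
      have hUV : U ≠ V := fun h => hne (by rw [h])
      exact hNC ⟨U, hU, V, hV, hUV, i0, hi0, k0, hk0, j0, hj0, l0, hl0,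
        by rw [Fin.lt_def]; omega, by rw [Fin.lt_def]; omega, by rw [Fin.lt_def]; omega⟩
    · intro B' hB'
      obtain ⟨B, hB, hBv⟩ := Finset.mem_image.1 hB'
      exact hBv ▸ Finset.mem_image_of_mem _ (hS1 hB)
    · intro B' hB'
      obtain ⟨B, hB, hBv⟩ := Finset.mem_image.1 hB'
      subst hBv
      intro U' hU' hne i hi j hj hx
      obtain ⟨U, hU, hUv⟩ := hmem_push hU'
      subst hUv
      obtain ⟨i0, hi0, hi0v⟩ := Finset.mem_image.1 hi
      obtain ⟨j0, hj0, hj0v⟩ := Finset.mem_image.1 hj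
      have hUB : U ≠ B := fun h => hne (by rw [h])
      apply hS2 B hB
      refine ⟨U, hU, hUB, i0, hi0, j0, hj0, ?_⟩
      intro x hxB
      have := hx (x : ℕ) (Finset.mem_image_of_mem _ hxB)
      constructor <;> rw [Fin.lt_def] <;> omega
  · -- backward membership
    intro q hq
    rw [Finset.mem_coe, mem_pairs] at hq
    obtain ⟨⟨hQ1, hQ2, hQ3⟩, hNC, hS1, hS2⟩ := hq
    rw [Finset.mem_coe, Finset.mem_filter]
    have hmem_pull : ∀ {B'}, B' ∈ (pull q.1 : Finset (Finset (Fin n))) →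
        ∃ B ∈ q.1, Finset.univ.filter (fun i : Fin n => (i : ℕ) ∈ B) = B' := by
      intro B' h
      obtain ⟨B, hB, hBv⟩ := Finset.mem_image.1 h
      exact ⟨B, hB, hBv⟩
    have hmemf : ∀ {B : Finset ℕ} {i : Fin n},
        i ∈ Finset.univ.filter (fun i : Fin n => (i : ℕ) ∈ B) ↔ (i : ℕ) ∈ B := by
      intro B i
      simp
    refine ⟨Finset.mem_univ _, ⟨?_, ?_⟩, ?_, ?_, ?_⟩
    · intro B' hB'
      obtain ⟨B, hB, hBv⟩ := hmem_pull hB'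
      obtain ⟨x, hx⟩ := (hQ1 B hB).1
      have hxn : x < n := (Finset.mem_Ico.1 ((hQ1 B hB).2 hx)).2
      exact ⟨⟨x, hxn⟩, hBv ▸ hmemf.2 hx⟩
    · intro i
      obtain ⟨B, hB, hiB⟩ := hQ2 (i : ℕ) (Finset.mem_Ico.2 ⟨Nat.zero_le _, i.isLt⟩)
      refine ⟨Finset.univ.filter (fun j : Fin n => (j : ℕ) ∈ B),
        ⟨Finset.mem_image_of_mem _ hB, hmemf.2 hiB⟩, ?_⟩
      rintro C' ⟨hC', hiC'⟩
      obtain ⟨C, hC, hCv⟩ := hmem_pull hC'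
      subst hCv
      have hiC := hmemf.1 hiC'
      have hBC : C = B := by
        by_contra hne
        exact hQ3 C hC B hB hne (i : ℕ) hiC hiB
      rw [hBC]
    · rintro ⟨U', hU', V', hV', hne, i, hi, k, hk, j, hj, l, hl, h1, h2, h3⟩
      obtain ⟨U, hU, hUv⟩ := hmem_pull hU'
      obtain ⟨V, hV, hVv⟩ := hmem_pull hV'
      subst hUv; subst hVv
      have hUV : U ≠ V := fun h => hne (by rw [h])
      rw [Fin.lt_def] at h1 h2 h3
      exact hNC U hU V hV hUV (i : ℕ) (hmemf.1 hi) (k : ℕ) (hmemf.1 hk)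
        (j : ℕ) (hmemf.1 hj) (l : ℕ) (hmemf.1 hl) h1 h2 h3
    · intro B' hB'
      obtain ⟨B, hB, hBv⟩ := Finset.mem_image.1 hB'
      exact hBv ▸ Finset.mem_image_of_mem _ (hS1 hB)
    · intro B' hB'
      obtain ⟨B, hB, hBv⟩ := Finset.mem_image.1 hB'
      subst hBv
      rintro ⟨U', hU', hne, i, hi, j, hj, hx⟩
      obtain ⟨U, hU, hUv⟩ := hmem_pull hU'
      subst hUv
      have hUB : U ≠ B := fun h => hne (by rw [h])
      apply hS2 B hB U hU hUB (i : ℕ) (hmemf.1 hi) (j : ℕ) (hmemf.1 hj)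
      intro x hxB
      have hxn : x < n := (Finset.mem_Ico.1 ((hQ1 B (hS1 hB)).2 hxB)).2
      have := hx ⟨x, hxn⟩ (hmemf.2 hxB)
      rw [Fin.lt_def, Fin.lt_def] at this
      exact this
  · -- left inverse
    intro p hp
    exact Prod.ext (pull_push p.1) (pull_push p.2)
  · -- right inverse
    intro q hq
    rw [Finset.mem_coe, mem_pairs] at hq
    have h1 : ∀ B ∈ q.1, B ⊆ Finset.Ico 0 n := fun B hB => (hq.1.1 B hB).2
    exact Prod.ext (push_pull h1) (push_pull (fun B hB => h1 B (hq.2.2.1 hB)))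

end NCAux

/-- The number of incomplete non-crossing partitions of `{1,…,n}` — pairs `(π, S)`
with `π` a non-crossing partition and `S` a set of outer blocks of `π` — equals the
central binomial coefficient `C(2n, n)`. -/
theorem stmt19 (n : ℕ) (hn : 1 ≤ n) :
    ((Finset.univ :
        Finset (Finset (Finset (Fin n)) × Finset (Finset (Fin n)))).filter
      (fun p => IsPartition p.1 ∧ IsNoncrossing p.1 ∧ p.2 ⊆ p.1 ∧
        ∀ B ∈ p.2, IsOuter p.1 B)).card
      = Nat.choose (2 * n) n := by
  rw [NCAux.main_transport n, NCAux.pairs_card n 0 n (by omega)]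
  rfl
end
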